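/- arXiv:2102.10155 — 5 statements merged into one kernel-verified Lean document; each statement's English description precedes it below -/
import Mathlib

section
/- For integers n, k with 0 < k < n and any integer q \ge 2, the Gaussian binomial coefficient satisfies [n choose k]_q \ge (1 + 1/q) q^{k(n-k)}. -/
/-- The Gaussian binomial coefficient `[m choose l]_q = ∏_{t=1}^{l} (q^{m-t+1}-1)/(q^t-1)`. -/
def gaussBinom (q : ℚ) (m l : ℕ) : ℚ :=
  ∏ t ∈ Finset.range l, (q ^ (m - t) - 1) / (q ^ (t + 1) - 1)

theorem gaussBinom_ge_strict (n k : ℕ) (hk0 : 0 < k) (hkn : k < n) (q : ℕ) (hq : 2 ≤ q) :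
    (1 + 1 / (q : ℚ)) * (q : ℚ) ^ (k * (n - k)) ≤ gaussBinom (q : ℚ) n k := by
  have hq2 : (2:ℚ) ≤ (q:ℚ) := by exact_mod_cast hq
  have hq0 : (0:ℚ) < q := by linarith
  have hq1 : (1:ℚ) ≤ q := by linarith
  have hpow1 : ∀ m : ℕ, (1:ℚ) ≤ (q:ℚ)^m := fun m => one_le_pow₀ hq1
  have hpos : ∀ b : ℕ, 1 ≤ b → (0:ℚ) < (q:ℚ)^b - 1 := by
    intro b hb
    have h2 : (q:ℚ) ≤ (q:ℚ)^b := le_self_pow₀ hq1 (by omega)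
    linarith
  have ratio : ∀ a b : ℕ, 1 ≤ b → b ≤ a →
      (q:ℚ)^(a-b) ≤ ((q:ℚ)^a - 1)/((q:ℚ)^b - 1) := by
    intro a b hb hba
    rw [le_div_iff₀ (hpos b hb)]
    have h1 : (q:ℚ)^(a-b) * (q:ℚ)^b = (q:ℚ)^a := by rw [← pow_add]; congr 1; omega
    nlinarith [hpow1 (a-b)]
  have key : gaussBinom (q:ℚ) n k
      = ∏ t ∈ Finset.range k, ((q:ℚ)^(n-t) - 1)/((q:ℚ)^(k-t) - 1) := by
    unfold gaussBinom
    rw [Finset.prod_div_distrib, Finset.prod_div_distrib]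
    congr 1
    rw [← Finset.prod_range_reflect (fun t => (q:ℚ)^(t+1) - 1) k]
    apply Finset.prod_congr rfl
    intro t ht
    simp only [Finset.mem_range] at ht
    congr 2
    omega
  rw [key]
  obtain ⟨m, rfl⟩ : ∃ m, k = m + 1 := ⟨k-1, by omega⟩
  rw [Finset.prod_range_succ]
  have hlast : (1 + 1/(q:ℚ)) * (q:ℚ)^(n-(m+1))
      ≤ ((q:ℚ)^(n-m) - 1)/((q:ℚ)^(m+1-m) - 1) := by
    obtain ⟨s, hs⟩ : ∃ s, n - (m+1) = s + 1 := ⟨n - m - 2, by omega⟩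
    have h1 : m + 1 - m = 1 := by omega
    have h2 : n - m = s + 2 := by omega
    rw [h1, h2, hs, pow_one]
    rw [le_div_iff₀ (by linarith)]
    have e1 : (1 + 1/(q:ℚ)) * (q:ℚ)^(s+1) * ((q:ℚ) - 1)
        = (q:ℚ)^(s+2) - (q:ℚ)^s := by
      field_simp
      ring
    rw [e1]
    nlinarith [hpow1 s]
  have hprod : (q:ℚ)^((n-(m+1))*m)
      ≤ ∏ t ∈ Finset.range m, ((q:ℚ)^(n-t) - 1)/((q:ℚ)^(m+1-t) - 1) := by
    have := Finset.prod_le_prod (f := fun _ : ℕ => (q:ℚ)^(n-(m+1)))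
      (g := fun t : ℕ => ((q:ℚ)^(n-t) - 1)/((q:ℚ)^(m+1-t) - 1))
      (s := Finset.range m)
      (fun i _ => by positivity)
      (fun i hi => by
        simp only [Finset.mem_range] at hi
        have h := ratio (n-i) (m+1-i) (by omega) (by omega)
        have he : n - i - (m+1-i) = n - (m+1) := by omega
        rwa [he] at h)
    simpa [Finset.prod_const, ← pow_mul] using this
  have hnonneg : (0:ℚ) ≤ (1 + 1/(q:ℚ)) * (q:ℚ)^(n-(m+1)) := by positivity
  calc (1 + 1/(q:ℚ)) * (q:ℚ)^((m+1)*(n-(m+1)))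
      = (q:ℚ)^((n-(m+1))*m) * ((1 + 1/(q:ℚ)) * (q:ℚ)^(n-(m+1))) := by
        rw [← mul_assoc, mul_comm ((q:ℚ)^((n-(m+1))*m)), mul_assoc, ← pow_add]
        congr 2
        ring
    _ ≤ (∏ t ∈ Finset.range m, ((q:ℚ)^(n-t) - 1)/((q:ℚ)^(m+1-t) - 1))
        * (((q:ℚ)^(n-m) - 1)/((q:ℚ)^(m+1-m) - 1)) := by
        apply mul_le_mul hprod hlast hnonneg
        exact le_trans (by positivity) hprod
end

section
/- Let q \ge 3, n = 2d, d \ge 2, 1 \le j \le d-1, and d \le i+j \le 2d-1 with 1 \le i \le d. Then the ratio of consecutive terms satisfies |T_{d-j-1}(i,j)| / |T_{d-j}(i,j)| = q^{i-d}(q^{d-i}-1)(q^{d-j}-1)(q^{j+1}-1) / ((q-1)(q^{(i+j)-d+1}-1)(q^{2d-(i+j)}-1)) < 27/32. -/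
/-- The `h`-th term of the eigenvalue expression for the Grassmann graph `G_q(n,d,j)`:
`T_h(i,j) = (-1)^{i-h} q^{j(j-i+h) + C(i-h,2)} [i,h]_q [d-h,j]_q [n-d-i+h, n-d-j]_q`. -/
def grassT (q : ℚ) (n d i j h : ℕ) : ℚ :=
  (-1 : ℚ) ^ (i - h) * q ^ ((j : ℤ) * ((j : ℤ) - (i : ℤ) + (h : ℤ)) + ((i - h).choose 2 : ℤ)) *
    gaussBinom q i h * gaussBinom q (d - h) j * gaussBinom q (n - d - i + h) (n - d - j)

set_option maxHeartbeats 1000000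

lemma gaussBinom_nonneg {q : ℚ} (hq : 1 ≤ q) (m l : ℕ) : 0 ≤ gaussBinom q m l := by
  refine Finset.prod_nonneg fun t _ => div_nonneg ?_ ?_
  · have : (1:ℚ) ≤ q ^ (m - t) := one_le_pow₀ hq
    linarith
  · have : (1:ℚ) ≤ q ^ (t + 1) := one_le_pow₀ hq
    linarith

lemma gaussBinom_pos {q : ℚ} (hq : 1 < q) {m l : ℕ} (h : l ≤ m) : 0 < gaussBinom q m l := by
  refine Finset.prod_pos fun t ht => div_pos ?_ ?_
  · have : (1:ℚ) < q ^ (m - t) := by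
      apply one_lt_pow₀ hq
      simp only [Finset.mem_range] at ht
      omega
    linarith
  · have : (1:ℚ) < q ^ (t + 1) := one_lt_pow₀ hq (by omega)
    linarith

lemma gaussBinom_eq_zero (q : ℚ) {m l : ℕ} (h : m < l) : gaussBinom q m l = 0 := by
  apply Finset.prod_eq_zero (Finset.mem_range.2 h)
  simp [Nat.sub_self]

lemma gaussBinom_succ (q : ℚ) (m l : ℕ) :
    gaussBinom q m (l + 1) = gaussBinom q m l * ((q ^ (m - l) - 1) / (q ^ (l + 1) - 1)) :=
  Finset.prod_range_succ _ _

lemma gaussBinom_shift (q : ℚ) (m : ℕ) : ∀ l : ℕ, l ≤ m →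
    gaussBinom q (m + 1) l * (q ^ (m + 1 - l) - 1) = gaussBinom q m l * (q ^ (m + 1) - 1)
  | 0, _ => by simp [gaussBinom]
  | (l+1), h => by
    have hl : l ≤ m := by omega
    have ih := gaussBinom_shift q m l hl
    rw [show m + 1 - l = m - l + 1 from by omega] at ih
    rw [gaussBinom_succ, gaussBinom_succ, show m + 1 - l = m - l + 1 from by omega,
      show m + 1 - (l + 1) = m - l from by omega]
    linear_combination ((q ^ (m - l) - 1) / (q ^ (l + 1) - 1)) * ih

lemma pow_prod_ineq {Q : ℚ} (hQ : 1 ≤ Q) (x y : ℕ) :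
    (Q - 1) * (Q ^ (x + y + 1) - 1) ≤ (Q ^ (x + 1) - 1) * (Q ^ (y + 1) - 1) := by
  have hx : (1:ℚ) ≤ Q ^ x := one_le_pow₀ hQ
  have hy : (1:ℚ) ≤ Q ^ y := one_le_pow₀ hQ
  have key : (Q ^ (x+1) - 1) * (Q ^ (y+1) - 1) - (Q - 1) * (Q ^ (x+y+1) - 1)
      = Q * ((Q ^ x - 1) * (Q ^ y - 1)) := by ring
  nlinarith [mul_nonneg (sub_nonneg.2 hx) (sub_nonneg.2 hy)]

lemma bound_lemma {Q : ℚ} (hQ : 3 ≤ Q) {d : ℕ} (hd : 2 ≤ d) :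
    32 * Q ^ (d + 1) ≤ 27 * (Q - 1) ^ 2 * (Q ^ d - 1) := by
  have hT : Q ^ 2 ≤ Q ^ d := pow_le_pow_right₀ (by linarith) hd
  have h1 : (0:ℚ) ≤ Q - 3 := by linarith
  rw [pow_succ]
  nlinarith [mul_nonneg h1 (sub_nonneg.2 hT), mul_nonneg (mul_nonneg h1 h1) (sub_nonneg.2 hT),
    sq_nonneg (Q - 3), mul_nonneg h1 h1, sq_nonneg Q, mul_nonneg (mul_nonneg h1 h1) h1]

lemma abs_term {Q A B C : ℚ} (hQ : 0 < Q) (hA : 0 ≤ A) (hB : 0 ≤ B) (hC : 0 ≤ C)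
    (k : ℕ) (e : ℤ) : |(-1:ℚ) ^ k * Q ^ e * A * B * C| = Q ^ e * A * B * C := by
  rw [abs_mul, abs_mul, abs_mul, abs_mul, abs_pow, abs_neg, abs_one, one_pow, one_mul,
    abs_of_pos (zpow_pos hQ e), abs_of_nonneg hA, abs_of_nonneg hB, abs_of_nonneg hC]

theorem grass_ratio_lt (q n d i j : ℕ) (hq : 3 ≤ q) (hn : n = 2 * d) (hd : 2 ≤ d)
    (hj1 : 1 ≤ j) (hj2 : j ≤ d - 1) (hi1 : 1 ≤ i) (hi2 : i ≤ d)
    (hij1 : d ≤ i + j) (hij2 : i + j ≤ 2 * d - 1) :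
    |grassT (q : ℚ) n d i j (d - j - 1)| / |grassT (q : ℚ) n d i j (d - j)| =
      (q : ℚ) ^ ((i : ℤ) - (d : ℤ)) * ((q : ℚ) ^ (d - i) - 1) * ((q : ℚ) ^ (d - j) - 1) *
          ((q : ℚ) ^ (j + 1) - 1) /
        (((q : ℚ) - 1) * ((q : ℚ) ^ ((i + j) - d + 1) - 1) * ((q : ℚ) ^ (2 * d - (i + j)) - 1)) ∧
    (q : ℚ) ^ ((i : ℤ) - (d : ℤ)) * ((q : ℚ) ^ (d - i) - 1) * ((q : ℚ) ^ (d - j) - 1) *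
          ((q : ℚ) ^ (j + 1) - 1) /
        (((q : ℚ) - 1) * ((q : ℚ) ^ ((i + j) - d + 1) - 1) * ((q : ℚ) ^ (2 * d - (i + j)) - 1)) <
      27 / 32 := by
  subst hn
  have hQ3 : (3:ℚ) ≤ (q:ℚ) := by exact_mod_cast hq
  set Q : ℚ := (q : ℚ) with hQdef
  have hQ1 : (1:ℚ) < Q := by linarith
  have hQ0 : (0:ℚ) < Q := by linarith
  by_cases hid : i = d
  · -- degenerate case: T_{d-j-1} = 0 and RHS = 0
    have hz : grassT Q (2 * d) d i j (d - j - 1) = 0 := by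
      simp only [grassT]
      rw [show 2 * d - d - i + (d - j - 1) = d - j - 1 from by omega,
        show 2 * d - d - j = d - j from by omega,
        gaussBinom_eq_zero Q (show d - j - 1 < d - j from by omega), mul_zero]
    rw [hz, abs_zero, zero_div, show d - i = 0 from by omega, pow_zero, sub_self, mul_zero,
      zero_mul, zero_mul, zero_div]
    exact ⟨rfl, by norm_num⟩
  · have hid' : i < d := lt_of_le_of_ne hi2 hid
    set a := d - j with ha
    set k := (i + j) - d with hk
    set m := 2 * d - (i + j) with hm
    set s := d - i with hs
    have ha1 : 1 ≤ a := by omega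
    have hm1 : 1 ≤ m := by omega
    have hs1 : 1 ≤ s := by omega
    have hak : a ≤ i := by omega
    have ham : a ≤ m - 1 := by omega
    -- the gaussian binomials
    set A₁ := gaussBinom Q i (a - 1) with hA₁
    set A₂ := gaussBinom Q i a with hA₂
    set B₁ := gaussBinom Q (j + 1) j with hB₁
    set B₂ := gaussBinom Q j j with hB₂
    set C₁ := gaussBinom Q (m - 1) a with hC₁
    set C₂ := gaussBinom Q m a with hC₂
    set E : ℤ := (j : ℤ) * ((j : ℤ) - (i : ℤ) + ((a : ℕ) : ℤ)) + (k.choose 2 : ℤ) with hE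
    -- absolute values of the two terms
    have hT2abs : |grassT Q (2 * d) d i j a| = Q ^ E * A₂ * B₂ * C₂ := by
      simp only [grassT]
      rw [show i - a = k from by omega, show d - a = j from by omega,
        show 2 * d - d - i + a = m from by omega, show 2 * d - d - j = a from by omega]
      exact abs_term hQ0 (gaussBinom_nonneg hQ1.le _ _) (gaussBinom_nonneg hQ1.le _ _)
        (gaussBinom_nonneg hQ1.le _ _) k E
    have hEsucc : (j : ℤ) * ((j : ℤ) - (i : ℤ) + (((a - 1 : ℕ)) : ℤ)) + ((k + 1).choose 2 : ℤ)
        = E + ((i : ℤ) - (d : ℤ)) := by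
      have hch : (k + 1).choose 2 = k.choose 2 + k := by
        rw [Nat.choose_succ_succ, Nat.choose_one_right, Nat.add_comm]
      rw [hch, hE]
      have h1 : ((a - 1 : ℕ) : ℤ) = (a : ℤ) - 1 := by omega
      have h2 : (k : ℤ) = (i : ℤ) + (j : ℤ) - (d : ℤ) := by omega
      push_cast
      rw [h1]
      linear_combination h2
    have hT1abs : |grassT Q (2 * d) d i j (a - 1)| = Q ^ E * Q ^ ((i:ℤ) - (d:ℤ)) * A₁ * B₁ * C₁ := by
      simp only [grassT]
      rw [show i - (a - 1) = k + 1 from by omega, show d - (a - 1) = j + 1 from by omega,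
        show 2 * d - d - i + (a - 1) = m - 1 from by omega,
        show 2 * d - d - j = a from by omega, hEsucc,
        zpow_add₀ (ne_of_gt hQ0)]
      have := abs_term hQ0 (gaussBinom_nonneg hQ1.le i (a-1)) (gaussBinom_nonneg hQ1.le (j+1) j)
        (gaussBinom_nonneg hQ1.le (m-1) a) (k+1) (E + ((i:ℤ) - (d:ℤ)))
      rw [zpow_add₀ (ne_of_gt hQ0)] at this
      exact this
    -- positivity facts
    have hApos : 0 < A₂ := gaussBinom_pos hQ1 hak
    have hBpos : 0 < B₂ := gaussBinom_pos hQ1 le_rfl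
    have hCpos : 0 < C₂ := gaussBinom_pos hQ1 (by omega : a ≤ m)
    have hQE : (0:ℚ) < Q ^ E := zpow_pos hQ0 E
    have hpow : ∀ t : ℕ, 1 ≤ t → (0:ℚ) < Q ^ t - 1 := fun t ht => by
      have : (1:ℚ) < Q ^ t := one_lt_pow₀ hQ1 (by omega)
      linarith
    have hQa := hpow a ha1
    have hQk := hpow (k + 1) (by omega)
    have hQm := hpow m hm1
    have hQs := hpow s hs1
    have hQj := hpow (j + 1) (by omega)
    have hQ1' : (0:ℚ) < Q - 1 := by linarith
    -- the three ratio relations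
    have rA : A₁ * (Q ^ (k + 1) - 1) = A₂ * (Q ^ a - 1) := by
      have h := gaussBinom_succ Q i (a - 1)
      rw [show a - 1 + 1 = a from by omega, show i - (a - 1) = k + 1 from by omega] at h
      rw [← hA₂] at h
      rw [h, ← hA₁]
      field_simp
    have rB : B₁ * (Q - 1) = B₂ * (Q ^ (j + 1) - 1) := by
      have h := gaussBinom_shift Q j j le_rfl
      rw [show j + 1 - j = 1 from by omega, pow_one] at h
      exact h
    have rC : C₂ * (Q ^ s - 1) = C₁ * (Q ^ m - 1) := by
      have h := gaussBinom_shift Q (m - 1) a ham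
      rw [show m - 1 + 1 = m from by omega, show m - a = s from by omega] at h
      exact h
    constructor
    · rw [hT1abs, hT2abs]
      have comb1 : A₁ * (Q ^ (k + 1) - 1) * (B₁ * (Q - 1)) * (C₁ * (Q ^ m - 1)) =
          A₂ * (Q ^ a - 1) * (B₂ * (Q ^ (j + 1) - 1)) * (C₂ * (Q ^ s - 1)) := by
        rw [rA, rB, ← rC]
      rw [div_eq_div_iff
        (by positivity : (0:ℚ) < Q ^ E * A₂ * B₂ * C₂).ne'
        (by positivity : (0:ℚ) < (Q - 1) * (Q ^ (k + 1) - 1) * (Q ^ m - 1)).ne']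
      linear_combination (Q ^ E * Q ^ ((i:ℤ) - (d:ℤ))) * comb1
    · -- the inequality
      have hZ : Q ^ ((i:ℤ) - (d:ℤ)) = (Q ^ s)⁻¹ := by
        rw [show (i:ℤ) - (d:ℤ) = -(s:ℤ) from by omega, zpow_neg, zpow_natCast]
      have hQspos : (0:ℚ) < Q ^ s := by positivity
      have p2 : Q ^ ((i:ℤ) - (d:ℤ)) * (Q ^ s - 1) ≤ 1 := by
        rw [hZ, inv_mul_eq_div, div_le_one hQspos]; linarith
      have p1 : 0 ≤ Q ^ ((i:ℤ) - (d:ℤ)) * (Q ^ s - 1) := by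
        rw [hZ]; positivity
      have h2 : (Q ^ a - 1) * (Q ^ (j + 1) - 1) < Q ^ (d + 1) := by
        rw [show d + 1 = a + (j + 1) from by omega]
        have hsplit : Q ^ (a + (j + 1)) = Q ^ a * Q ^ (j + 1) := pow_add Q a (j + 1)
        have hA : (1:ℚ) ≤ Q ^ a := one_le_pow₀ hQ1.le
        have hB : (1:ℚ) ≤ Q ^ (j + 1) := one_le_pow₀ hQ1.le
        have key : Q ^ a * Q ^ (j + 1) - (Q ^ a - 1) * (Q ^ (j + 1) - 1)
            = Q ^ a + Q ^ (j + 1) - 1 := by ring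
        linarith
      have h3 : (Q - 1) * (Q ^ d - 1) ≤ (Q ^ (k + 1) - 1) * (Q ^ m - 1) := by
        have h := pow_prod_ineq hQ1.le k (m - 1)
        rw [show m - 1 + 1 = m from by omega, show k + (m - 1) + 1 = d from by omega] at h
        exact h
      have h4 := bound_lemma hQ3 hd
      rw [div_lt_div_iff₀ (by positivity : (0:ℚ) < (Q - 1) * (Q ^ (k + 1) - 1) * (Q ^ m - 1))
        (by norm_num : (0:ℚ) < 32)]
      have hx23 : (0:ℚ) < (Q ^ a - 1) * (Q ^ (j + 1) - 1) := by positivity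
      have step1 : (Q ^ ((i:ℤ) - (d:ℤ)) * (Q ^ s - 1)) * ((Q ^ a - 1) * (Q ^ (j + 1) - 1)) ≤
          (Q ^ a - 1) * (Q ^ (j + 1) - 1) := mul_le_of_le_one_left hx23.le p2
      have step2 := mul_le_mul_of_nonneg_left h3 (le_of_lt hQ1')
      calc Q ^ ((i:ℤ) - (d:ℤ)) * (Q ^ s - 1) * (Q ^ a - 1) * (Q ^ (j + 1) - 1) * 32
          = 32 * ((Q ^ ((i:ℤ) - (d:ℤ)) * (Q ^ s - 1)) * ((Q ^ a - 1) * (Q ^ (j + 1) - 1))) := by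
            ring
        _ ≤ 32 * ((Q ^ a - 1) * (Q ^ (j + 1) - 1)) := by linarith
        _ < 32 * Q ^ (d + 1) := by linarith
        _ ≤ 27 * (Q - 1) ^ 2 * (Q ^ d - 1) := h4
        _ = 27 * ((Q - 1) * ((Q - 1) * (Q ^ d - 1))) := by ring
        _ ≤ 27 * ((Q - 1) * ((Q ^ (k + 1) - 1) * (Q ^ m - 1))) := by linarith
        _ = 27 * ((Q - 1) * (Q ^ (k + 1) - 1) * (Q ^ m - 1)) := by ring
end

section
/- Let q \ge 3, n \ge 2d, 0 \le i \le d, 1 \le j \le d, and let c = g_{h_{max}}(i,j) where h_{max} = min(i, d-j) and g_h(i,j) = -h^2/2 + h(n-d-j+1/2) + j(d-j) + i(i-1)/2 + (n-d)(j-i). If not (n = 2d and d-j \le i), then (4/9) q^c < |G_j(i)| < 4 q^c, where G_j(i) is the eigenvalue of the Grassmann graph G_q(n,d,j). -/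
/-- The eigenvalue `G_j(i)` of the Grassmann graph `G_q(n,d,j)`. -/
def grassG (q : ℚ) (n d j i : ℕ) : ℚ :=
  ∑ h ∈ Finset.Icc (i - j) (min i (d - j)), grassT q n d i j h

/-- The exponent `c = g_{h_max}(i,j)`, the exponent of `q` in `T_{h_max}(i,j)` when each
Gaussian binomial `[m,l]_q` is approximated by `q^{l(m-l)}`. -/
def grassC (n d i j : ℕ) : ℤ :=
  (j : ℤ) * ((j : ℤ) - (i : ℤ) + (min i (d - j) : ℤ)) + ((i - min i (d - j)).choose 2 : ℤ) +
    (min i (d - j) : ℤ) * ((i : ℤ) - (min i (d - j) : ℤ)) +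
    (j : ℤ) * ((d : ℤ) - (min i (d - j) : ℤ) - (j : ℤ)) +
    ((n : ℤ) - (d : ℤ) - (j : ℤ)) * ((min i (d - j) : ℤ) - (i : ℤ) + (j : ℤ))

section GB
variable {q : ℚ}

lemma pow31 (hq : 3 ≤ q) (t : ℕ) : (1:ℚ) < q ^ (t+1) := by
  calc (1:ℚ) < 3 := by norm_num
  _ ≤ q := hq
  _ ≤ q ^ (t+1) := le_self_pow₀ (by linarith) (Nat.succ_ne_zero t)

lemma pow_sub_ne (hq : 3 ≤ q) (t : ℕ) : q ^ (t+1) - 1 ≠ 0 := by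
  have := pow31 hq t; linarith

lemma gb_succ_right (q : ℚ) (m l : ℕ) :
    gaussBinom q m (l+1) = gaussBinom q m l * ((q ^ (m - l) - 1) / (q ^ (l + 1) - 1)) :=
  Finset.prod_range_succ _ l

lemma gb_self (hq : 3 ≤ q) (l : ℕ) : gaussBinom q l l = 1 := by
  unfold gaussBinom
  rw [Finset.prod_div_distrib, div_eq_one_iff_eq
    (Finset.prod_ne_zero_iff.mpr fun t _ => pow_sub_ne hq t)]
  rw [← Finset.prod_range_reflect (fun t => q ^ (t+1) - 1) l]
  apply Finset.prod_congr rfl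
  intro t ht
  simp only [Finset.mem_range] at ht
  congr 2
  omega

lemma gb_succ_left (hq : 3 ≤ q) (m : ℕ) : ∀ l ≤ m,
    gaussBinom q (m+1) l * (q ^ (m+1-l) - 1) = gaussBinom q m l * (q ^ (m+1) - 1) := by
  intro l
  induction l with
  | zero => intro _; simp [gaussBinom]
  | succ l ih =>
    intro hl
    have hl' : l ≤ m := by omega
    have ih' := ih hl'
    rw [gb_succ_right, gb_succ_right]
    have h1 : q ^ (l+1) - 1 ≠ 0 := pow_sub_ne hq l
    have e1 : m + 1 - (l+1) = m - l := by omega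
    rw [e1]
    field_simp
    linear_combination (q^(m-l)-1) * ih'

lemma gb_lower (hq : 3 ≤ q) {m l : ℕ} (hlm : l ≤ m) :
    q ^ (l * (m - l)) ≤ gaussBinom q m l := by
  have hq1 : (1:ℚ) ≤ q := by linarith
  have hq0 : (0:ℚ) < q := by linarith
  induction m, hlm using Nat.le_induction with
  | base => rw [gb_self hq, Nat.sub_self, Nat.mul_zero, pow_zero]
  | succ m hlm ih =>
    have key := gb_succ_left hq m l hlm
    have hx : (0:ℚ) < q ^ (m+1-l) - 1 := by
      have : m+1-l = (m-l)+1 := by omega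
      rw [this]; have := pow31 hq (m-l); linarith
    have hy : q ^ l * (q ^ (m+1-l) - 1) ≤ q ^ (m+1) - 1 := by
      have : q ^ l * q ^ (m+1-l) = q ^ (m+1) := by
        rw [← pow_add]; congr 1; omega
      have hl1 : (1:ℚ) ≤ q ^ l := one_le_pow₀ hq1
      nlinarith
    have hpos : (0:ℚ) < gaussBinom q m l :=
      lt_of_lt_of_le (pow_pos hq0 _) ih
    have h2 : q ^ (l * (m - l)) * (q ^ l * (q ^ (m+1-l) - 1)) ≤
        gaussBinom q (m+1) l * (q ^ (m+1-l) - 1) := by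
      rw [key]
      have : q ^ (l * (m - l)) * (q ^ l * (q ^ (m+1-l) - 1)) ≤
          gaussBinom q m l * (q ^ l * (q ^ (m+1-l) - 1)) := by
        apply mul_le_mul_of_nonneg_right ih
        positivity
      refine this.trans ?_
      apply mul_le_mul_of_nonneg_left hy (le_of_lt hpos)
    have h3 : q ^ (l * (m + 1 - l)) = q ^ (l * (m - l)) * q ^ l := by
      rw [← pow_add]; congr 1
      have : m + 1 - l = (m - l) + 1 := by omega
      rw [this]; ring
    rw [h3]
    have := le_of_mul_le_mul_right (by linarith [h2] : q ^ (l*(m-l)) * q ^ l * (q ^ (m+1-l) - 1) ≤ gaussBinom q (m+1) l * (q ^ (m+1-l) - 1)) hx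
    exact this

lemma gb_pos (hq : 3 ≤ q) {m l : ℕ} (hlm : l ≤ m) : 0 < gaussBinom q m l :=
  lt_of_lt_of_le (pow_pos (by linarith) _) (gb_lower hq hlm)

lemma step_ineq (q A K P G : ℚ) (hq : 3 ≤ q) (hA : 1 ≤ A) (hK : 1 ≤ K) (hP : 1 ≤ P)
    (hG : 0 < G) (ih : G * (A + 1) ≤ 2 * A * (P * A)) :
    G * (q * K - 1) * (q * A + 1) ≤ 2 * (q * A) * (P * K) * (q * A - 1) := by
  have hA1 : (0:ℚ) < A + 1 := by linarith
  have hqK : (3:ℚ) ≤ q * K := by nlinarith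
  have hqA : (3:ℚ) ≤ q * A := by nlinarith
  have h1 : (0:ℚ) ≤ q * A - 2 * A - 1 := by nlinarith
  have scalar : A * (q * K - 1) * (q * A + 1) ≤ (q * K) * (q * A - 1) * (A + 1) := by
    nlinarith [mul_nonneg (by linarith : (0:ℚ) ≤ q * K) h1]
  have main : G * (q * K - 1) * (q * A + 1) * (A + 1) ≤
      2 * (q * A) * (P * K) * (q * A - 1) * (A + 1) := by
    calc G * (q * K - 1) * (q * A + 1) * (A + 1)
        = (G * (A + 1)) * ((q * K - 1) * (q * A + 1)) := by ring
      _ ≤ (2 * A * (P * A)) * ((q * K - 1) * (q * A + 1)) := by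
          apply mul_le_mul_of_nonneg_right ih
          nlinarith
      _ = (2 * A * P) * (A * (q * K - 1) * (q * A + 1)) := by ring
      _ ≤ (2 * A * P) * ((q * K) * (q * A - 1) * (A + 1)) := by
          apply mul_le_mul_of_nonneg_left scalar
          nlinarith
      _ = 2 * (q * A) * (P * K) * (q * A - 1) * (A + 1) := by ring
  exact le_of_mul_le_mul_right main hA1

lemma gb_upper' (hq : 3 ≤ q) {m : ℕ} : ∀ l ≤ m,
    gaussBinom q m l * (q ^ l + 1) ≤ 2 * q ^ l * q ^ (l * (m - l)) := by
  have hq1 : (1:ℚ) ≤ q := by linarith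
  have hq0 : (0:ℚ) < q := by linarith
  intro l
  induction l with
  | zero => intro _; simp [gaussBinom]; norm_num
  | succ l ih =>
    intro hl
    have hl' : l ≤ m := by omega
    have ih' := ih hl'
    obtain ⟨k, hk⟩ : ∃ k, m = l + 1 + k := ⟨m - l - 1, by omega⟩
    subst hk
    have key : gaussBinom q (l+1+k) (l+1) * (q ^ (l+1) - 1) =
        gaussBinom q (l+1+k) l * (q ^ (k+1) - 1) := by
      rw [gb_succ_right]
      have h1 : q ^ (l+1) - 1 ≠ 0 := pow_sub_ne hq l
      have e : l + 1 + k - l = k + 1 := by omega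
      rw [e]; field_simp
    have hGpos : 0 < gaussBinom q (l+1+k) l := gb_pos hq hl'
    have e1 : l + 1 + k - l = k + 1 := by omega
    have e2 : l + 1 + k - (l + 1) = k := by omega
    rw [e1, show l * (k+1) = l*k + l by ring, pow_add] at ih'
    rw [e2, show (l+1) * k = l*k + k by ring]
    have hCpos : (0:ℚ) < q ^ (l+1) - 1 := by
      have := pow31 hq l; linarith
    rw [← mul_le_mul_iff_of_pos_right hCpos]
    have lhs_eq : gaussBinom q (l+1+k) (l+1) * (q ^ (l+1) + 1) * (q ^ (l+1) - 1) =
        gaussBinom q (l+1+k) l * (q ^ (k+1) - 1) * (q ^ (l+1) + 1) := by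
      rw [← key]; ring
    rw [lhs_eq]
    have step := step_ineq q (q^l) (q^k) (q^(l*k)) (gaussBinom q (l+1+k) l) hq
      (one_le_pow₀ hq1) (one_le_pow₀ hq1) (one_le_pow₀ hq1) hGpos (by linarith [ih'])
    calc gaussBinom q (l+1+k) l * (q ^ (k+1) - 1) * (q ^ (l+1) + 1)
        = gaussBinom q (l+1+k) l * (q * q^k - 1) * (q * q^l + 1) := by ring
      _ ≤ 2 * (q * q^l) * (q^(l*k) * q^k) * (q * q^l - 1) := step
      _ = 2 * q ^ (l+1) * q ^ (l*k + k) * (q ^ (l+1) - 1) := by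
          rw [pow_add]; ring

lemma gb_upper (hq : 3 ≤ q) {m l : ℕ} (hlm : l ≤ m) :
    gaussBinom q m l < 2 * q ^ (l * (m - l)) := by
  have h := gb_upper' hq l hlm
  have hq0 : (0:ℚ) < q := by linarith
  have h1 : (0:ℚ) < q ^ l := pow_pos hq0 l
  have h2 : (0:ℚ) < q ^ (l * (m - l)) := pow_pos hq0 _
  nlinarith [gb_pos hq hlm]

end GB

def uTerm (q : ℚ) (n d i j h : ℕ) : ℚ :=
  q ^ (j * (j + h - i) + (i - h).choose 2) * gaussBinom q i h * gaussBinom q (d - h) j *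
    gaussBinom q (n - d - i + h) (n - d - j)

lemma grassT_eq (q : ℚ) (n d i j h : ℕ) (hih : i ≤ j + h) :
    grassT q n d i j h = (-1:ℚ)^(i-h) * uTerm q n d i j h := by
  unfold grassT uTerm
  have e : (j:ℤ) * ((j:ℤ) - (i:ℤ) + (h:ℤ)) + ((i - h).choose 2 : ℤ)
      = ((j * (j + h - i) + (i - h).choose 2 : ℕ) : ℤ) := by
    have e2 : ((j + h - i : ℕ) : ℤ) = (j:ℤ) + h - i := by omega
    push_cast [e2]
    ring
  rw [e, zpow_natCast]
  ring

lemma alt_sum (v : ℕ → ℚ) (i lo H : ℕ) (hHi : H ≤ i)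
    (hpos : ∀ h, lo ≤ h → h ≤ H → 0 < v h)
    (hratio : ∀ k, lo ≤ k → k + 1 ≤ H → 8 * v k ≤ 3 * v (k + 1)) :
    ∀ M, lo ≤ M → M ≤ H →
      ((5/8 : ℚ) * v M ≤ (-1:ℚ)^(i - M) * ∑ h ∈ Finset.Icc lo M, (-1:ℚ)^(i-h) * v h ∧
       (-1:ℚ)^(i - M) * ∑ h ∈ Finset.Icc lo M, (-1:ℚ)^(i-h) * v h ≤ v M) := by
  intro M hM
  induction M, hM using Nat.le_induction with
  | base =>
    intro _
    rw [Finset.Icc_self, Finset.sum_singleton]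
    have hsq : ((-1:ℚ))^(i-lo) * (-1:ℚ)^(i-lo) = 1 := by
      rw [← pow_add]
      exact Even.neg_one_pow ⟨i - lo, rfl⟩
    have hv := hpos lo le_rfl (le_trans le_rfl ‹lo ≤ H›)
    constructor
    · nlinarith
    · nlinarith
  | succ M hM ih =>
    intro hMH
    have hMH' : M ≤ H := by omega
    have hMi : M + 1 ≤ i := by omega
    obtain ⟨ihl, ihu⟩ := ih hMH'
    rw [Finset.sum_Icc_succ_top (by omega : lo ≤ M + 1)]
    set S := ∑ h ∈ Finset.Icc lo M, (-1:ℚ)^(i-h) * v h with hS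
    set P := ((-1:ℚ))^(i - (M+1)) with hP
    have hsq : P * P = 1 := by
      rw [hP, ← pow_add]
      exact Even.neg_one_pow ⟨i - (M+1), rfl⟩
    have epar : i - M = (i - (M+1)) + 1 := by omega
    have hflip : ((-1:ℚ))^(i - M) = -P := by
      rw [hP, epar, pow_succ]; ring
    have hPS : P * (S + P * v (M+1)) = v (M+1) - ((-1:ℚ))^(i-M) * S := by
      rw [hflip]; linear_combination (v (M+1)) * hsq
    rw [hPS]
    have hr := hratio M hM hMH
    have hvM := hpos M hM hMH'
    have hvM1 := hpos (M+1) (by omega) hMH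
    constructor
    · linarith
    · linarith

lemma scalar_key (q : ℚ) (hq : 3 ≤ q) (E0 a b w k c : ℕ) :
    8 * (q^E0 * (q^(k+1)-1) * (q^(a+b+w+2)-1) * (q^(w+1)-1)) ≤
    3 * ((q^E0 * q^(w+1)) * (q^(a+1)-1) * (q^(b+1)-1) * (q^(w+k+3+c)-1)) := by
  have hq0 : (0:ℚ) < q := by linarith
  have h3e : ∀ e : ℕ, (3:ℚ) ≤ q^(e+1) := fun e => le_trans hq (le_self_pow₀ (by linarith) (Nat.succ_ne_zero e))
  have hk := h3e k
  have habw := h3e (a+b+w+1)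
  have hw := h3e w
  have ha := h3e a
  have hb := h3e b
  have hwkc := h3e (w+k+2+c)
  have e1 : a+b+w+1+1 = a+b+w+2 := by omega
  have e2 : w+k+2+c+1 = w+k+3+c := by omega
  rw [e1] at habw
  rw [e2] at hwkc
  have h9 : (9:ℚ) ≤ q^(2+c) := by
    calc (9:ℚ) = 3^2 := by norm_num
    _ ≤ 3^(2+c) := by
        apply pow_le_pow_right₀ (by norm_num : (1:ℚ) ≤ 3) (by omega)
    _ ≤ q^(2+c) := by
        apply pow_le_pow_left₀ (by norm_num) hq
  have epow : q^(a+1)*q^(b+1)*q^(w+k+3+c) = q^(k+1)*q^(a+b+w+2)*q^(2+c) := by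
    rw [← pow_add, ← pow_add, ← pow_add, ← pow_add]
    congr 1
    omega
  have hE0 : (0:ℚ) < q^E0 := pow_pos hq0 _
  calc 8 * (q^E0 * (q^(k+1)-1) * (q^(a+b+w+2)-1) * (q^(w+1)-1))
      ≤ 8 * (q^E0 * q^(k+1) * q^(a+b+w+2) * q^(w+1)) := by
        have p1 : (0:ℚ) ≤ q^(k+1)-1 := by linarith
        have p2 : (0:ℚ) ≤ q^(a+b+w+2)-1 := by linarith
        have p3 : (0:ℚ) ≤ q^(w+1)-1 := by linarith
        have b1 : q^(k+1)-1 ≤ q^(k+1) := by linarith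
        have b2 : q^(a+b+w+2)-1 ≤ q^(a+b+w+2) := by linarith
        have b3 : q^(w+1)-1 ≤ q^(w+1) := by linarith
        gcongr <;> linarith
    _ ≤ 3 * ((q^E0 * q^(w+1)) * ((2/3)*q^(a+1)) * ((2/3)*q^(b+1)) * ((2/3)*q^(w+k+3+c))) := by
        have expand : 3 * ((q^E0 * q^(w+1)) * ((2/3)*q^(a+1)) * ((2/3)*q^(b+1)) * ((2/3)*q^(w+k+3+c)))
            = (8/9) * (q^E0 * q^(w+1)) * (q^(a+1)*q^(b+1)*q^(w+k+3+c)) := by ring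
        rw [expand, epow]
        have hY : (0:ℚ) < q^E0 * q^(w+1) * (q^(k+1)*q^(a+b+w+2)) := by positivity
        nlinarith [mul_le_mul_of_nonneg_left h9 (le_of_lt (by positivity : (0:ℚ) < (8/9) * (q^E0 * q^(w+1)) * (q^(k+1)*q^(a+b+w+2))))]
    _ ≤ 3 * ((q^E0 * q^(w+1)) * (q^(a+1)-1) * (q^(b+1)-1) * (q^(w+k+3+c)-1)) := by
        have b1 : (2/3)*q^(a+1) ≤ q^(a+1)-1 := by linarith
        have b2 : (2/3)*q^(b+1) ≤ q^(b+1)-1 := by linarith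
        have b3 : (2/3)*q^(w+k+3+c) ≤ q^(w+k+3+c)-1 := by linarith
        have hP : (0:ℚ) ≤ q^E0 * q^(w+1) := by positivity
        have hX : (0:ℚ) ≤ (q^E0 * q^(w+1)) * (q^(a+1)-1) := mul_nonneg hP (by linarith)
        have hY : (0:ℚ) ≤ (q^E0 * q^(w+1)) * (q^(a+1)-1) * (q^(b+1)-1) :=
          mul_nonneg hX (by linarith)
        have s1 := mul_le_mul_of_nonneg_right (mul_le_mul_of_nonneg_right
          (mul_le_mul_of_nonneg_left b1 hP)
          (by positivity : (0:ℚ) ≤ (2/3)*q^(b+1))) (by positivity : (0:ℚ) ≤ (2/3)*q^(w+k+3+c))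
        have s2 := mul_le_mul_of_nonneg_right (mul_le_mul_of_nonneg_left b2 hX)
          (by positivity : (0:ℚ) ≤ (2/3)*q^(w+k+3+c))
        have s3 := mul_le_mul_of_nonneg_left b3 hY
        linarith

lemma uTerm_param (q : ℚ) (a w b c k : ℕ) :
    uTerm q (2*k+2*a+b+2*w+5+c) (k+a+b+w+2) (k+1+a) (a+1+w) k
      = q ^ ((a+1+w)*w + (a+1).choose 2) * gaussBinom q (k+1+a) k *
        gaussBinom q (a+b+w+2) (a+1+w) * gaussBinom q (w+k+2+c) (k+2+c) := by
  unfold uTerm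
  rw [show a+1+w+k-(k+1+a) = w from by omega,
      show k+1+a-k = a+1 from by omega,
      show k+a+b+w+2-k = a+b+w+2 from by omega,
      show 2*k+2*a+b+2*w+5+c - (k+a+b+w+2) - (k+1+a) + k = w+k+2+c from by omega,
      show 2*k+2*a+b+2*w+5+c - (k+a+b+w+2) - (a+1+w) = k+2+c from by omega]

lemma uTerm_param' (q : ℚ) (a w b c k : ℕ) :
    uTerm q (2*k+2*a+b+2*w+5+c) (k+a+b+w+2) (k+1+a) (a+1+w) (k+1)
      = q ^ ((a+1+w)*(w+1) + a.choose 2) * gaussBinom q (k+1+a) (k+1) *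
        gaussBinom q (a+b+w+1) (a+1+w) * gaussBinom q (w+k+3+c) (k+2+c) := by
  unfold uTerm
  rw [show a+1+w+(k+1)-(k+1+a) = w+1 from by omega,
      show k+1+a-(k+1) = a from by omega,
      show k+a+b+w+2-(k+1) = a+b+w+1 from by omega,
      show 2*k+2*a+b+2*w+5+c - (k+a+b+w+2) - (k+1+a) + (k+1) = w+k+3+c from by omega,
      show 2*k+2*a+b+2*w+5+c - (k+a+b+w+2) - (a+1+w) = k+2+c from by omega]

lemma ratio_lemma (q : ℚ) (hq : 3 ≤ q) (n d i j k : ℕ)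
    (h1 : i ≤ k + j) (h2 : k + 1 ≤ i) (h3 : k + 1 + j ≤ d) (h4 : d + j + k + 2 ≤ n) :
    8 * uTerm q n d i j k ≤ 3 * uTerm q n d i j (k+1) := by
  obtain ⟨a, rfl⟩ : ∃ a, i = k+1+a := ⟨i-k-1, by omega⟩
  obtain ⟨w, rfl⟩ : ∃ w, j = a+1+w := ⟨j-a-1, by omega⟩
  obtain ⟨b, rfl⟩ : ∃ b, d = k+a+b+w+2 := ⟨d-k-a-w-2, by omega⟩
  obtain ⟨c, rfl⟩ : ∃ c, n = 2*k+2*a+b+2*w+5+c := ⟨n - (2*k+2*a+b+2*w+5), by omega⟩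
  rw [uTerm_param, uTerm_param']
  set G1 := gaussBinom q (k+1+a) k with hG1d
  set G1' := gaussBinom q (k+1+a) (k+1) with hG1'd
  set G2 := gaussBinom q (a+b+w+2) (a+1+w) with hG2d
  set G2' := gaussBinom q (a+b+w+1) (a+1+w) with hG2'd
  set G3 := gaussBinom q (w+k+2+c) (k+2+c) with hG3d
  set G3' := gaussBinom q (w+k+3+c) (k+2+c) with hG3'd
  have hq0 : (0:ℚ) < q := by linarith
  have h3e : ∀ e : ℕ, (3:ℚ) ≤ q^(e+1) := fun e => le_trans hq (le_self_pow₀ (by linarith) (Nat.succ_ne_zero e))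
  have R1 : G1' * (q^(k+1) - 1) = G1 * (q^(a+1) - 1) := by
    have r := gb_succ_right q (k+1+a) k
    rw [show k+1+a-k = a+1 from by omega] at r
    rw [hG1'd, r]
    have : q^(k+1) - 1 ≠ 0 := pow_sub_ne hq k
    field_simp
    rw [hG1d]; ring
  have R2 : G2 * (q^(b+1)-1) = G2' * (q^(a+b+w+2)-1) := by
    have r := gb_succ_left hq (a+b+w+1) (a+1+w) (by omega)
    rw [show a+b+w+1+1 = a+b+w+2 from by omega] at r
    rw [show a+b+w+2-(a+1+w) = b+1 from by omega] at r
    exact r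
  have R3 : G3' * (q^(w+1)-1) = G3 * (q^(w+k+3+c)-1) := by
    have r := gb_succ_left hq (w+k+2+c) (k+2+c) (by omega)
    rw [show w+k+2+c+1 = w+k+3+c from by omega] at r
    rw [show w+k+3+c-(k+2+c) = w+1 from by omega] at r
    exact r
  have hG1' : 0 < G1' := gb_pos hq (by omega)
  have hG2' : 0 < G2' := gb_pos hq (by omega)
  have hG3' : 0 < G3' := gb_pos hq (by omega)
  have hD : (0:ℚ) < (q^(a+1)-1) * ((q^(b+1)-1) * (q^(w+k+3+c)-1)) := by
    have p1 := h3e a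
    have p2 := h3e b
    have p3 := h3e (w+k+2+c)
    rw [show w+k+2+c+1 = w+k+3+c from by omega] at p3
    have : (0:ℚ) < q^(a+1)-1 := by linarith
    have : (0:ℚ) < q^(b+1)-1 := by linarith
    have : (0:ℚ) < q^(w+k+3+c)-1 := by linarith
    positivity
  have hEE : (a+1+w)*(w+1) + a.choose 2 = (a+1+w)*w + (a+1).choose 2 + (w+1) := by
    have hch : (a+1).choose 2 = a + a.choose 2 := by
      rw [Nat.choose_succ_succ, Nat.choose_one_right]
    rw [Nat.mul_succ, hch]
    omega
  have hE1eq : q ^ ((a+1+w)*(w+1) + a.choose 2) = q ^ ((a+1+w)*w + (a+1).choose 2) * q^(w+1) := by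
    rw [hEE, pow_add]
  apply le_of_mul_le_mul_right _ hD
  calc 8 * (q ^ ((a+1+w)*w + (a+1).choose 2) * G1 * G2 * G3) * ((q^(a+1)-1) * ((q^(b+1)-1) * (q^(w+k+3+c)-1)))
      = 8 * q ^ ((a+1+w)*w + (a+1).choose 2) * (G1 * (q^(a+1)-1)) * (G2 * (q^(b+1)-1)) * (G3 * (q^(w+k+3+c)-1)) := by ring
    _ = 8 * q ^ ((a+1+w)*w + (a+1).choose 2) * (G1' * (q^(k+1)-1)) * (G2' * (q^(a+b+w+2)-1)) * (G3' * (q^(w+1)-1)) := by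
        rw [← R1, R2, R3]
    _ = (8 * (q ^ ((a+1+w)*w + (a+1).choose 2) * (q^(k+1)-1) * (q^(a+b+w+2)-1) * (q^(w+1)-1))) * (G1' * G2' * G3') := by ring
    _ ≤ (3 * ((q ^ ((a+1+w)*w + (a+1).choose 2) * q^(w+1)) * (q^(a+1)-1) * (q^(b+1)-1) * (q^(w+k+3+c)-1))) * (G1' * G2' * G3') := by
        apply mul_le_mul_of_nonneg_right (scalar_key q hq _ a b w k c)
        positivity
    _ = 3 * (q ^ ((a+1+w)*(w+1) + a.choose 2) * G1' * G2' * G3') * ((q^(a+1)-1) * ((q^(b+1)-1) * (q^(w+k+3+c)-1))) := by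
        rw [hE1eq]; ring

lemma uTop1 (q : ℚ) (hq : 3 ≤ q) (i j g f : ℕ) :
    q ^ (j*j + j*g + (i+g+f)*j) ≤ uTerm q (2*(i+j+g)+f) (i+j+g) i j i ∧
    uTerm q (2*(i+j+g)+f) (i+j+g) i j i < 4 * q ^ (j*j + j*g + (i+g+f)*j) := by
  have hq0 : (0:ℚ) < q := by linarith
  unfold uTerm
  rw [show j+i-i = j from by omega,
      show i-i = 0 from by omega,
      show i+j+g-i = j+g from by omega,
      show 2*(i+j+g)+f - (i+j+g) - i + i = i+j+g+f from by omega,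
      show 2*(i+j+g)+f - (i+j+g) - j = i+g+f from by omega,
      gb_self hq i,
      show Nat.choose 0 2 = 0 from rfl, Nat.add_zero]
  have l2 := gb_lower hq (show j ≤ j+g by omega)
  have u2 := gb_upper hq (show j ≤ j+g by omega)
  have l3 := gb_lower hq (show i+g+f ≤ i+j+g+f by omega)
  have u3 := gb_upper hq (show i+g+f ≤ i+j+g+f by omega)
  rw [show j+g-j = g from by omega] at l2 u2
  rw [show i+j+g+f-(i+g+f) = j from by omega] at l3 u3
  have p2 : 0 < gaussBinom q (j+g) j := gb_pos hq (by omega)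
  have p3 : 0 < gaussBinom q (i+j+g+f) (i+g+f) := gb_pos hq (by omega)
  constructor
  · calc q ^ (j*j + j*g + (i+g+f)*j) = q^(j*j) * 1 * q^(j*g) * q^((i+g+f)*j) := by
          rw [pow_add, pow_add]; ring
      _ ≤ q^(j*j) * 1 * gaussBinom q (j+g) j * q^((i+g+f)*j) :=
          mul_le_mul_of_nonneg_right (mul_le_mul_of_nonneg_left l2 (by positivity))
            (by positivity)
      _ ≤ q^(j*j) * 1 * gaussBinom q (j+g) j * gaussBinom q (i+j+g+f) (i+g+f) :=
          mul_le_mul_of_nonneg_left l3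
            (mul_nonneg (by positivity) p2.le)
  · calc q^(j*j) * 1 * gaussBinom q (j+g) j * gaussBinom q (i+j+g+f) (i+g+f)
        = q^(j*j) * (gaussBinom q (j+g) j * gaussBinom q (i+j+g+f) (i+g+f)) := by ring
      _ < q^(j*j) * ((2 * q^(j*g)) * (2 * q^((i+g+f)*j))) := by
          apply mul_lt_mul_of_pos_left _ (by positivity)
          exact mul_lt_mul'' u2 u3 p2.le p3.le
      _ = 4 * q ^ (j*j + j*g + (i+g+f)*j) := by
          rw [pow_add, pow_add]; ring

lemma uTop2 (q : ℚ) (hq : 3 ≤ q) (s r v f : ℕ) :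
    q ^ ((r+v)*v + r.choose 2 + s*r + (s+f)*v) ≤ uTerm q (2*(s+r+v)+f) (s+r+v) (s+r) (r+v) s ∧
    uTerm q (2*(s+r+v)+f) (s+r+v) (s+r) (r+v) s < 4 * q ^ ((r+v)*v + r.choose 2 + s*r + (s+f)*v) := by
  have hq0 : (0:ℚ) < q := by linarith
  unfold uTerm
  rw [show r+v+s-(s+r) = v from by omega,
      show s+r-s = r from by omega,
      show s+r+v-s = r+v from by omega,
      show 2*(s+r+v)+f - (s+r+v) - (s+r) + s = s+v+f from by omega,
      show 2*(s+r+v)+f - (s+r+v) - (r+v) = s+f from by omega,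
      gb_self hq (r+v)]
  have l1 := gb_lower hq (show s ≤ s+r by omega)
  have u1 := gb_upper hq (show s ≤ s+r by omega)
  have l3 := gb_lower hq (show s+f ≤ s+v+f by omega)
  have u3 := gb_upper hq (show s+f ≤ s+v+f by omega)
  rw [show s+r-s = r from by omega] at l1 u1
  rw [show s+v+f-(s+f) = v from by omega] at l3 u3
  have p1 : 0 < gaussBinom q (s+r) s := gb_pos hq (by omega)
  have p3 : 0 < gaussBinom q (s+v+f) (s+f) := gb_pos hq (by omega)
  constructor
  · calc q ^ ((r+v)*v + r.choose 2 + s*r + (s+f)*v)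
        = q^((r+v)*v + r.choose 2) * q^(s*r) * 1 * q^((s+f)*v) := by
          rw [pow_add, pow_add]; ring
      _ ≤ q^((r+v)*v + r.choose 2) * gaussBinom q (s+r) s * 1 * q^((s+f)*v) :=
          mul_le_mul_of_nonneg_right (mul_le_mul_of_nonneg_right
            (mul_le_mul_of_nonneg_left l1 (by positivity)) (by norm_num)) (by positivity)
      _ ≤ q^((r+v)*v + r.choose 2) * gaussBinom q (s+r) s * 1 * gaussBinom q (s+v+f) (s+f) :=
          mul_le_mul_of_nonneg_left l3
            (by positivity)
  · calc q^((r+v)*v + r.choose 2) * gaussBinom q (s+r) s * 1 * gaussBinom q (s+v+f) (s+f)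
        = q^((r+v)*v + r.choose 2) * (gaussBinom q (s+r) s * gaussBinom q (s+v+f) (s+f)) := by ring
      _ < q^((r+v)*v + r.choose 2) * ((2 * q^(s*r)) * (2 * q^((s+f)*v))) := by
          apply mul_lt_mul_of_pos_left _ (by positivity)
          exact mul_lt_mul'' u1 u3 p1.le p3.le
      _ = 4 * q ^ ((r+v)*v + r.choose 2 + s*r + (s+f)*v) := by
          rw [pow_add, pow_add]; ring

lemma main_core (q : ℚ) (hq : 3 ≤ q) (n d i j E : ℕ)
    (hn : 2*d ≤ n) (hi : i ≤ d) (hj : j ≤ d)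
    (hstep : ∀ k, i ≤ k + j → k + 1 ≤ min i (d-j) → d + j + k + 2 ≤ n)
    (hlow : q ^ E ≤ uTerm q n d i j (min i (d-j)))
    (hupp : uTerm q n d i j (min i (d-j)) < 4 * q ^ E) :
    (4/9 : ℚ) * q ^ E < |∑ h ∈ Finset.Icc (i-j) (min i (d-j)), grassT q n d i j h| ∧
    |∑ h ∈ Finset.Icc (i-j) (min i (d-j)), grassT q n d i j h| < 4 * q ^ E := by
  have hq0 : (0:ℚ) < q := by linarith
  set H := min i (d-j) with hH
  have hHi : H ≤ i := min_le_left _ _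
  have hHd : H ≤ d - j := min_le_right _ _
  have hlo : i - j ≤ H := by omega
  have hsum : ∑ h ∈ Finset.Icc (i-j) H, grassT q n d i j h
      = ∑ h ∈ Finset.Icc (i-j) H, (-1:ℚ)^(i-h) * uTerm q n d i j h := by
    refine Finset.sum_congr rfl fun h hh => ?_
    rw [Finset.mem_Icc] at hh
    exact grassT_eq q n d i j h (by omega)
  have hpos : ∀ h, i-j ≤ h → h ≤ H → 0 < uTerm q n d i j h := by
    intro h h1 h2
    unfold uTerm
    have g1 : 0 < gaussBinom q i h := gb_pos hq (by omega)
    have g2 : 0 < gaussBinom q (d-h) j := gb_pos hq (by omega)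
    have g3 : 0 < gaussBinom q (n-d-i+h) (n-d-j) := gb_pos hq (by omega)
    exact mul_pos (mul_pos (mul_pos (pow_pos hq0 _) g1) g2) g3
  have hratio : ∀ k, i-j ≤ k → k+1 ≤ H → 8 * uTerm q n d i j k ≤ 3 * uTerm q n d i j (k+1) :=
    fun k h1 h2 => ratio_lemma q hq n d i j k (by omega) (by omega) (by omega)
      (hstep k (by omega) h2)
  obtain ⟨hl, hu⟩ := alt_sum (uTerm q n d i j) i (i-j) H hHi hpos hratio H hlo le_rfl
  have hvH := hpos H hlo le_rfl
  rw [hsum]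
  have hy : (0:ℚ) ≤ (-1:ℚ)^(i-H) * ∑ h ∈ Finset.Icc (i-j) H, (-1:ℚ)^(i-h) * uTerm q n d i j h := by
    have : (0:ℚ) ≤ (5/8:ℚ) * uTerm q n d i j H := by positivity
    linarith
  have habs : |∑ h ∈ Finset.Icc (i-j) H, (-1:ℚ)^(i-h) * uTerm q n d i j h|
      = (-1:ℚ)^(i-H) * ∑ h ∈ Finset.Icc (i-j) H, (-1:ℚ)^(i-h) * uTerm q n d i j h := by
    calc |∑ h ∈ Finset.Icc (i-j) H, (-1:ℚ)^(i-h) * uTerm q n d i j h|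
        = |(-1:ℚ)^(i-H)| * |∑ h ∈ Finset.Icc (i-j) H, (-1:ℚ)^(i-h) * uTerm q n d i j h| := by
          rw [abs_pow, abs_neg, abs_one, one_pow, one_mul]
      _ = |(-1:ℚ)^(i-H) * ∑ h ∈ Finset.Icc (i-j) H, (-1:ℚ)^(i-h) * uTerm q n d i j h| :=
          (abs_mul _ _).symm
      _ = (-1:ℚ)^(i-H) * ∑ h ∈ Finset.Icc (i-j) H, (-1:ℚ)^(i-h) * uTerm q n d i j h :=
          abs_of_nonneg hy
  rw [habs]
  have hpE : (0:ℚ) < q ^ E := pow_pos hq0 _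
  constructor
  · have : (4/9:ℚ) * q^E < (5/8:ℚ) * q^E := by nlinarith
    have h2 : (5/8:ℚ) * q^E ≤ (5/8:ℚ) * uTerm q n d i j H := by linarith
    linarith
  · linarith


theorem grassG_bounds (q n d i j : ℕ) (hq : 3 ≤ q) (hn : 2 * d ≤ n)
    (hi : i ≤ d) (hj1 : 1 ≤ j) (hj2 : j ≤ d) (hcond : ¬(n = 2 * d ∧ d ≤ i + j)) :
    (4 / 9 : ℚ) * (q : ℚ) ^ grassC n d i j < |grassG (q : ℚ) n d j i| ∧
    |grassG (q : ℚ) n d j i| < 4 * (q : ℚ) ^ grassC n d i j := by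
  have hq' : (3:ℚ) ≤ (q:ℚ) := by exact_mod_cast hq
  rw [grassG]
  rcases le_total i (d - j) with hcase | hcase
  · -- H = i
    obtain ⟨g, rfl⟩ : ∃ g, d = i+j+g := ⟨d-i-j, by omega⟩
    obtain ⟨f, rfl⟩ : ∃ f, n = 2*(i+j+g)+f := ⟨n-2*(i+j+g), by omega⟩
    have hmin : min i (i+j+g-j) = i := by omega
    have hE := uTop1 (q:ℚ) hq' i j g f
    have hgc : ((q:ℚ)) ^ grassC (2*(i+j+g)+f) (i+j+g) i j
        = (q:ℚ) ^ (j*j + j*g + (i+g+f)*j) := by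
      have hcast : grassC (2*(i+j+g)+f) (i+j+g) i j = ((j*j + j*g + (i+g+f)*j : ℕ) : ℤ) := by
        have hminZ : min (i:ℤ) ((((i+j+g) : ℕ):ℤ) - ((j:ℕ):ℤ)) = (i:ℤ) := by omega
        unfold grassC
        rw [hmin, hminZ, Nat.sub_self, show Nat.choose 0 2 = 0 from rfl]
        push_cast
        ring
      rw [hcast, zpow_natCast]
    rw [hgc]
    exact main_core (q:ℚ) hq' _ _ i j _ (by omega) (by omega) (by omega)
      (fun k h1 h2 => by omega)
      (by rw [hmin]; exact hE.1) (by rw [hmin]; exact hE.2)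
  · -- H = d - j
    obtain ⟨s, r, v, f, rfl, rfl, rfl, rfl⟩ :
        ∃ s r v f, i = s+r ∧ j = r+v ∧ d = s+r+v ∧ n = 2*(s+r+v)+f :=
      ⟨d-j, i-(d-j), j-(i-(d-j)), n-2*d, by omega, by omega, by omega, by omega⟩
    have hmin : min (s+r) (s+r+v - (r+v)) = s := by omega
    have hE := uTop2 (q:ℚ) hq' s r v f
    have hgc : ((q:ℚ)) ^ grassC (2*(s+r+v)+f) (s+r+v) (s+r) (r+v)
        = (q:ℚ) ^ ((r+v)*v + r.choose 2 + s*r + (s+f)*v) := by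
      have hcast : grassC (2*(s+r+v)+f) (s+r+v) (s+r) (r+v)
          = (((r+v)*v + r.choose 2 + s*r + (s+f)*v : ℕ) : ℤ) := by
        have hminZ : min ((s+r : ℕ):ℤ) ((((s+r+v) : ℕ):ℤ) - (((r+v):ℕ):ℤ)) = (s:ℤ) := by omega
        unfold grassC
        rw [hmin, hminZ, show s+r-s = r from by omega]
        push_cast
        ring
      rw [hcast, zpow_natCast]
    rw [hgc]
    exact main_core (q:ℚ) hq' _ _ (s+r) (r+v) _ (by omega) (by omega) (by omega)
      (fun k h1 h2 => by omega)
      (by rw [hmin]; exact hE.1) (by rw [hmin]; exact hE.2)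
end

section
/- Let q \ge 3 or (q = 2 and d \ne e), with d \le e. Then for all 0 \le i \le d and 1 \le j \le d, the eigenvalue B_j(i) of the bilinear forms graph H_q(d,e,j) has sign (-1)^{max(0, j+i-d)}, and satisfies |T_{h_{max}}(i,j)| - |T_{h_{max}-1}(i,j)| \le |B_j(i)| \le |T_{h_{max}}(i,j)|, where T_h(i,j) = (-1)^{j-h} q^{eh + \binom{j-h}{2}} [d-h choose d-j]_q [d-i choose h]_q, h_{max} = min(j, d-i), and T_{-1} = 0. -/
/-- The `h`-th term of the eigenvalue expression for the bilinear forms graph `H_q(d,e,j)`: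
`T_h(i,j) = (-1)^{j-h} q^{eh + C(j-h,2)} [d-h, d-j]_q [d-i, h]_q`. -/
def bilinT (q : ℚ) (d e j i h : ℕ) : ℚ :=
  (-1 : ℚ) ^ (j - h) * q ^ (e * h + (j - h).choose 2) *
    gaussBinom q (d - h) (d - j) * gaussBinom q (d - i) h

/-- The eigenvalue `B_j(i)` of the bilinear forms graph `H_q(d,e,j)`. -/
def bilinB (q : ℚ) (d e j i : ℕ) : ℚ :=
  ∑ h ∈ Finset.range (min j (d - i) + 1), bilinT q d e j i h

lemma gauss_pos {Q : ℚ} (hQ : 1 < Q) {m l : ℕ} (hlm : l ≤ m) : 0 < gaussBinom Q m l := by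
  apply Finset.prod_pos
  intro t ht
  simp only [Finset.mem_range] at ht
  have h0 : (0:ℚ) < Q := by linarith
  apply div_pos
  · have : (1:ℚ) < Q ^ (m - t) := one_lt_pow₀ hQ (by omega)
    linarith
  · have : (1:ℚ) < Q ^ (t + 1) := one_lt_pow₀ hQ (by omega)
    linarith

lemma gauss_succ (Q : ℚ) (m l : ℕ) :
    gaussBinom Q m (l+1) = gaussBinom Q m l * ((Q ^ (m - l) - 1) / (Q ^ (l + 1) - 1)) :=
  Finset.prod_range_succ _ _

lemma gauss_pred (Q : ℚ) (m l : ℕ) :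
    gaussBinom Q (m-1) l * (Q ^ m - 1) = gaussBinom Q m l * (Q ^ (m - l) - 1) := by
  unfold gaussBinom
  rw [Finset.prod_div_distrib, Finset.prod_div_distrib, div_mul_eq_mul_div, div_mul_eq_mul_div]
  congr 1
  have h1 : (∏ t ∈ Finset.range l, (Q ^ (m - 1 - t) - 1)) * (Q ^ m - 1)
      = ∏ t ∈ Finset.range (l+1), (Q ^ (m - t) - 1) := by
    rw [Finset.prod_range_succ']
    congr 1
    exact Finset.prod_congr rfl fun t _ => by congr 2; omega
  have h2 : (∏ t ∈ Finset.range l, (Q ^ (m - t) - 1)) * (Q ^ (m - l) - 1)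
      = ∏ t ∈ Finset.range (l+1), (Q ^ (m - t) - 1) := (Finset.prod_range_succ _ _).symm
  rw [h1, h2]

lemma bilinT_sign_pos {Q : ℚ} (hQ : 1 < Q) {d e j i h : ℕ} (hj : j ≤ d)
    (hhj : h ≤ j) (hhi : h ≤ d - i) :
    0 < bilinT Q d e j i h * (-1) ^ (j - h) := by
  unfold bilinT
  have h1 : ((-1:ℚ) ^ (j-h) * Q ^ (e * h + (j - h).choose 2) * gaussBinom Q (d - h) (d - j) *
      gaussBinom Q (d - i) h) * (-1) ^ (j - h)
      = ((-1:ℚ) ^ (j-h) * (-1) ^ (j-h)) * (Q ^ (e * h + (j - h).choose 2) *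
        gaussBinom Q (d - h) (d - j) * gaussBinom Q (d - i) h) := by ring
  rw [h1, ← pow_add]
  have h2 : ((-1:ℚ)) ^ ((j-h) + (j-h)) = 1 := Even.neg_one_pow ⟨j-h, rfl⟩
  rw [h2, one_mul]
  have h0 : (0:ℚ) < Q := by linarith
  exact mul_pos (mul_pos (pow_pos h0 _) (gauss_pos hQ (by omega))) (gauss_pos hQ hhi)

lemma bilinT_rec {Q : ℚ} (hQ : 1 < Q) {d e j i h : ℕ} (hde : d ≤ e)
    (hj : j ≤ d) (hhj : h + 1 ≤ j) :
    bilinT Q d e j i (h+1) * ((Q ^ (d-h) - 1) * (Q ^ (h+1) - 1)) =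
    - (bilinT Q d e j i h *
        (Q ^ (e - j + h + 1) * ((Q ^ (j-h) - 1) * (Q ^ (d - i - h) - 1)))) := by
  have h0 : (0:ℚ) < Q := by linarith
  have hsign : (-1:ℚ) ^ (j - (h+1)) = - (-1:ℚ) ^ (j - h) := by
    have : j - h = (j - (h+1)) + 1 := by omega
    rw [this, pow_succ]
    ring
  have hexp : e * (h+1) + (j - (h+1)).choose 2 =
      (e * h + (j - h).choose 2) + (e - j + h + 1) := by
    obtain ⟨k, hk⟩ : ∃ k, j - h = k + 1 := ⟨j - h - 1, by omega⟩
    have hc : (j - h).choose 2 = k + k.choose 2 := by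
      rw [hk, Nat.choose_succ_succ, Nat.choose_one_right]
    have hk2 : j - (h+1) = k := by omega
    rw [hk2, hc, Nat.mul_succ]
    have he : j ≤ e := le_trans hj hde
    omega
  have hpow : Q ^ (e * (h+1) + (j - (h+1)).choose 2) =
      Q ^ (e * h + (j - h).choose 2) * Q ^ (e - j + h + 1) := by
    rw [hexp, pow_add]
  have hA : gaussBinom Q (d - (h+1)) (d - j) * (Q ^ (d - h) - 1) =
      gaussBinom Q (d - h) (d - j) * (Q ^ (j - h) - 1) := by
    have e1 : d - (h+1) = (d - h) - 1 := by omega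
    have e2 : (d - h) - (d - j) = j - h := by omega
    rw [e1, gauss_pred Q (d-h) (d-j), e2]
  have hBden : Q ^ (h+1) - 1 ≠ 0 := by
    have : (1:ℚ) < Q ^ (h+1) := one_lt_pow₀ hQ (by omega)
    linarith
  have hB : gaussBinom Q (d - i) (h+1) * (Q ^ (h+1) - 1) =
      gaussBinom Q (d - i) h * (Q ^ (d - i - h) - 1) := by
    rw [gauss_succ]
    field_simp
  unfold bilinT
  rw [hsign, hpow]
  calc (- (-1:ℚ) ^ (j - h) * (Q ^ (e * h + (j - h).choose 2) * Q ^ (e - j + h + 1)) *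
        gaussBinom Q (d - (h+1)) (d - j) * gaussBinom Q (d - i) (h+1)) *
        ((Q ^ (d-h) - 1) * (Q ^ (h+1) - 1))
      = - ((-1:ℚ) ^ (j - h) * (Q ^ (e * h + (j - h).choose 2) * Q ^ (e - j + h + 1)) *
        (gaussBinom Q (d - (h+1)) (d - j) * (Q ^ (d-h) - 1)) *
        (gaussBinom Q (d - i) (h+1) * (Q ^ (h+1) - 1))) := by ring
    _ = - ((-1:ℚ) ^ (j - h) * (Q ^ (e * h + (j - h).choose 2) * Q ^ (e - j + h + 1)) *
        (gaussBinom Q (d - h) (d - j) * (Q ^ (j - h) - 1)) *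
        (gaussBinom Q (d - i) h * (Q ^ (d - i - h) - 1))) := by rw [hA, hB]
    _ = - ((-1:ℚ) ^ (j - h) * Q ^ (e * h + (j - h).choose 2) *
        gaussBinom Q (d - h) (d - j) * gaussBinom Q (d - i) h *
        (Q ^ (e - j + h + 1) * ((Q ^ (j-h) - 1) * (Q ^ (d - i - h) - 1)))) := by ring

lemma bilin_L_ge {q d e j i h : ℕ} (hq : 3 ≤ q ∨ (q = 2 ∧ d ≠ e)) (hde : d ≤ e)
    (hi : i ≤ d) (hj : j ≤ d) (hhj : h + 1 ≤ j) (hhi : h + 1 ≤ d - i) :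
    (q:ℚ) ^ (d+1) ≤ (q:ℚ) ^ (e - j + h + 1) * (((q:ℚ) ^ (j-h) - 1) * ((q:ℚ) ^ (d - i - h) - 1)) := by
  set Q : ℚ := (q:ℚ) with hQdef
  have hq2 : (2:ℚ) ≤ Q := by
    rcases hq with h3 | ⟨h2, _⟩
    · exact_mod_cast le_trans (by norm_num) (Nat.cast_le.mpr h3 : (3:ℚ) ≤ q)
    · rw [hQdef, h2]; norm_num
  have h1 : (1:ℚ) ≤ Q := by linarith
  have h0 : (0:ℚ) < Q := by linarith
  obtain ⟨a, ha⟩ : ∃ a, j - h = a + 1 := ⟨j - h - 1, by omega⟩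
  obtain ⟨b, hb⟩ : ∃ b, d - i - h = b + 1 := ⟨d - i - h - 1, by omega⟩
  have hfa : Q ^ a * (Q - 1) ≤ Q ^ (j - h) - 1 := by
    rw [ha, pow_succ]
    have : (1:ℚ) ≤ Q ^ a := one_le_pow₀ h1
    nlinarith
  have hfb : Q ^ b * (Q - 1) ≤ Q ^ (d - i - h) - 1 := by
    rw [hb, pow_succ]
    have : (1:ℚ) ≤ Q ^ b := one_le_pow₀ h1
    nlinarith
  have hpa : (0:ℚ) ≤ Q ^ a * (Q - 1) := mul_nonneg (pow_nonneg h0.le _) (by linarith)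
  have hpb : (0:ℚ) ≤ Q ^ b * (Q - 1) := mul_nonneg (pow_nonneg h0.le _) (by linarith)
  have hmul : (Q ^ a * (Q - 1)) * (Q ^ b * (Q - 1)) ≤
      (Q ^ (j-h) - 1) * (Q ^ (d - i - h) - 1) := by
    apply mul_le_mul hfa hfb hpb
    nlinarith [one_le_pow₀ h1 (n := j - h)]
  have key : Q ^ (d+1) ≤ Q ^ (e - j + h + 1) * ((Q ^ a * (Q - 1)) * (Q ^ b * (Q - 1))) := by
    have hrw : Q ^ (e - j + h + 1) * ((Q ^ a * (Q - 1)) * (Q ^ b * (Q - 1))) =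
        Q ^ (e - j + h + 1 + a + b) * (Q - 1) ^ 2 := by
      rw [pow_add, pow_add]; ring
    rw [hrw]
    rcases hq with h3 | ⟨h2, hdne⟩
    · have hQ3 : (3:ℚ) ≤ Q := by rw [hQdef]; exact_mod_cast h3
      have hs : d ≤ e - j + h + 1 + a + b := by omega
      have hp : Q ^ d ≤ Q ^ (e - j + h + 1 + a + b) := pow_le_pow_right₀ h1 hs
      have hQsq : Q ≤ (Q - 1) ^ 2 := by nlinarith
      calc Q ^ (d+1) = Q ^ d * Q := by rw [pow_succ]
        _ ≤ Q ^ (e - j + h + 1 + a + b) * (Q - 1) ^ 2 :=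
            mul_le_mul hp hQsq (by linarith) (pow_nonneg h0.le _)
    · have hs : d + 1 ≤ e - j + h + 1 + a + b := by omega
      have hp : Q ^ (d+1) ≤ Q ^ (e - j + h + 1 + a + b) := pow_le_pow_right₀ h1 hs
      have : (Q - 1) ^ 2 = 1 := by rw [hQdef, h2]; norm_num
      rw [this, mul_one]; exact hp
  calc Q ^ (d+1) ≤ Q ^ (e - j + h + 1) * ((Q ^ a * (Q - 1)) * (Q ^ b * (Q - 1))) := key
    _ ≤ Q ^ (e - j + h + 1) * ((Q ^ (j-h) - 1) * (Q ^ (d - i - h) - 1)) :=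
        mul_le_mul_of_nonneg_left hmul (pow_nonneg h0.le _)

lemma bilin_bracket_lt {Q : ℚ} (hQ : 1 < Q) {d h : ℕ} (hh : h < d) :
    (Q ^ (d - h) - 1) * (Q ^ (h + 1) - 1) < Q ^ (d + 1) := by
  have h0 : (0:ℚ) < Q := by linarith
  have e1 : (1:ℚ) < Q ^ (d - h) := one_lt_pow₀ hQ (by omega)
  have e2 : (1:ℚ) < Q ^ (h + 1) := one_lt_pow₀ hQ (by omega)
  have : Q ^ (d - h) * Q ^ (h + 1) = Q ^ (d + 1) := by
    rw [← pow_add]; congr 1; omega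
  nlinarith

/-- magnitudes strictly increase along the sum -/
lemma bilinP_lt {q d e j i h : ℕ} (hq : 3 ≤ q ∨ (q = 2 ∧ d ≠ e)) (hde : d ≤ e)
    (hi : i ≤ d) (hj : j ≤ d) (hhj : h + 1 ≤ j) (hhi : h + 1 ≤ d - i) :
    bilinT (q:ℚ) d e j i h * (-1) ^ (j - h) <
      bilinT (q:ℚ) d e j i (h+1) * (-1) ^ (j - (h+1)) := by
  set Q : ℚ := (q:ℚ) with hQdef
  have hq2 : (2:ℚ) ≤ Q := by
    rcases hq with h3 | ⟨h2, _⟩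
    · exact_mod_cast le_trans (by norm_num) (Nat.cast_le.mpr h3 : (3:ℚ) ≤ q)
    · rw [hQdef, h2]; norm_num
  have hQ : (1:ℚ) < Q := by linarith
  have h0 : (0:ℚ) < Q := by linarith
  have hB1 : (0:ℚ) < Q ^ (d - h) - 1 := by
    have : (1:ℚ) < Q ^ (d - h) := one_lt_pow₀ hQ (by omega)
    linarith
  have hB2 : (0:ℚ) < Q ^ (h + 1) - 1 := by
    have : (1:ℚ) < Q ^ (h + 1) := one_lt_pow₀ hQ (by omega)
    linarith
  have hBpos : (0:ℚ) < (Q ^ (d - h) - 1) * (Q ^ (h + 1) - 1) := mul_pos hB1 hB2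
  have hP : 0 < bilinT Q d e j i h * (-1) ^ (j - h) :=
    bilinT_sign_pos hQ hj (by omega) (by omega)
  have hrec := bilinT_rec hQ (i := i) hde hj hhj
  -- multiply the recurrence by (-1)^(j-(h+1))
  have hsign : -(-1:ℚ) ^ (j - (h+1)) = (-1:ℚ) ^ (j - h) := by
    have : j - h = (j - (h+1)) + 1 := by omega
    rw [this, pow_succ]
    ring
  have hkey : bilinT Q d e j i (h+1) * (-1) ^ (j - (h+1)) *
        ((Q ^ (d-h) - 1) * (Q ^ (h+1) - 1)) =
      bilinT Q d e j i h * (-1) ^ (j - h) *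
        (Q ^ (e - j + h + 1) * ((Q ^ (j-h) - 1) * (Q ^ (d - i - h) - 1))) := by
    calc bilinT Q d e j i (h+1) * (-1) ^ (j - (h+1)) *
          ((Q ^ (d-h) - 1) * (Q ^ (h+1) - 1))
        = bilinT Q d e j i (h+1) * ((Q ^ (d-h) - 1) * (Q ^ (h+1) - 1)) *
          (-1) ^ (j - (h+1)) := by ring
      _ = - (bilinT Q d e j i h *
            (Q ^ (e - j + h + 1) * ((Q ^ (j-h) - 1) * (Q ^ (d - i - h) - 1)))) *
          (-1) ^ (j - (h+1)) := by rw [hrec]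
      _ = bilinT Q d e j i h * (-(-1:ℚ) ^ (j - (h+1))) *
          (Q ^ (e - j + h + 1) * ((Q ^ (j-h) - 1) * (Q ^ (d - i - h) - 1))) := by ring
      _ = _ := by rw [hsign]
  have hL : (Q ^ (d - h) - 1) * (Q ^ (h + 1) - 1) <
      Q ^ (e - j + h + 1) * ((Q ^ (j-h) - 1) * (Q ^ (d - i - h) - 1)) :=
    lt_of_lt_of_le (bilin_bracket_lt hQ (by omega)) (bilin_L_ge hq hde hi hj hhj hhi)
  have hlt : bilinT Q d e j i h * (-1) ^ (j - h) *
        ((Q ^ (d-h) - 1) * (Q ^ (h+1) - 1)) <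
      bilinT Q d e j i (h+1) * (-1) ^ (j - (h+1)) *
        ((Q ^ (d-h) - 1) * (Q ^ (h+1) - 1)) := by
    rw [hkey]
    exact mul_lt_mul_of_pos_left hL hP
  exact lt_of_mul_lt_mul_right hlt hBpos.le

theorem bilinB_main_term_bounds (q d e i j : ℕ) (hde : d ≤ e)
    (hq : 3 ≤ q ∨ (q = 2 ∧ d ≠ e)) (hi : i ≤ d) (hj1 : 1 ≤ j) (hj2 : j ≤ d) :
    (|bilinT (q : ℚ) d e j i (min j (d - i))| -
        (if min j (d - i) = 0 then 0 else |bilinT (q : ℚ) d e j i (min j (d - i) - 1)|) ≤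
      |bilinB (q : ℚ) d e j i|) ∧
    |bilinB (q : ℚ) d e j i| ≤ |bilinT (q : ℚ) d e j i (min j (d - i))| ∧
    0 < bilinB (q : ℚ) d e j i * (-1 : ℚ) ^ (j + i - d) := by
  set Q : ℚ := (q:ℚ) with hQdef
  have hq2 : (2:ℚ) ≤ Q := by
    rcases hq with h3 | ⟨h2, _⟩
    · exact_mod_cast le_trans (by norm_num) (Nat.cast_le.mpr h3 : (3:ℚ) ≤ q)
    · rw [hQdef, h2]; norm_num
  have hQ : (1:ℚ) < Q := by linarith
  set m : ℕ := min j (d - i) with hm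
  set T : ℕ → ℚ := fun h => bilinT Q d e j i h with hT
  set P : ℕ → ℚ := fun h => T h * (-1) ^ (j - h) with hP
  -- |T h| = P h for h ≤ m
  have habs : ∀ h, h ≤ m → |T h| = P h := by
    intro h hh
    have hpos : 0 < P h := bilinT_sign_pos hQ hj2 (by omega) (by omega)
    have : |P h| = P h := abs_of_pos hpos
    calc |T h| = |T h| * |(-1:ℚ) ^ (j - h)| := by
          rw [abs_pow, abs_neg, abs_one, one_pow, mul_one]
      _ = |T h * (-1) ^ (j - h)| := (abs_mul _ _).symm
      _ = P h := this
  -- key induction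
  have key : ∀ n, n ≤ m →
      0 < (∑ h ∈ Finset.range (n+1), T h) * (-1) ^ (j - n) ∧
      P n - (if n = 0 then 0 else P (n-1)) ≤
        (∑ h ∈ Finset.range (n+1), T h) * (-1) ^ (j - n) ∧
      (∑ h ∈ Finset.range (n+1), T h) * (-1) ^ (j - n) ≤ P n := by
    intro n
    induction n with
    | zero =>
      intro _
      rw [Finset.sum_range_one]
      rw [if_pos rfl, sub_zero]
      have hpos : 0 < P 0 := bilinT_sign_pos hQ hj2 (by omega) (by omega)
      exact ⟨hpos, le_refl _, le_refl _⟩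
    | succ n ih =>
      intro hn
      obtain ⟨ih1, ih2, ih3⟩ := ih (by omega)
      have hPlt : P n < P (n+1) := bilinP_lt hq hde hi hj2 (by omega) (by omega)
      have hsign : ((-1:ℚ)) ^ (j - (n+1)) = - (-1:ℚ) ^ (j - n) * 1 := by
        have hjn : j - n = (j - (n+1)) + 1 := by omega
        rw [hjn, pow_succ]; ring
      have hsum : (∑ h ∈ Finset.range (n+1+1), T h) * (-1) ^ (j - (n+1)) =
          P (n+1) - (∑ h ∈ Finset.range (n+1), T h) * (-1) ^ (j - n) := by
        simp only [hP]
        rw [Finset.sum_range_succ, hsign]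
        ring
      rw [hsum]
      refine ⟨by linarith, ?_, by linarith⟩
      have hne : ¬ (n + 1 = 0) := by omega
      rw [if_neg hne]
      simp only [Nat.add_sub_cancel]
      linarith
  obtain ⟨k1, k2, k3⟩ := key m (le_refl m)
  have hBdef : bilinB Q d e j i = ∑ h ∈ Finset.range (m+1), T h := rfl
  have hjm : j + i - d = j - m := by omega
  have habsB : |bilinB Q d e j i| = (∑ h ∈ Finset.range (m+1), T h) * (-1) ^ (j - m) := by
    rw [hBdef]
    have h1 : |(∑ h ∈ Finset.range (m+1), T h) * (-1:ℚ) ^ (j - m)| =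
        (∑ h ∈ Finset.range (m+1), T h) * (-1) ^ (j - m) := abs_of_pos k1
    calc |∑ h ∈ Finset.range (m+1), T h|
        = |∑ h ∈ Finset.range (m+1), T h| * |(-1:ℚ) ^ (j - m)| := by
          rw [abs_pow, abs_neg, abs_one, one_pow, mul_one]
      _ = |(∑ h ∈ Finset.range (m+1), T h) * (-1:ℚ) ^ (j - m)| := (abs_mul _ _).symm
      _ = _ := h1
  refine ⟨?_, ?_, ?_⟩
  · show |T m| - (if m = 0 then 0 else |T (m-1)|) ≤ |bilinB Q d e j i|
    rw [habsB, habs m (le_refl m)]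
    have hif : (if m = 0 then (0:ℚ) else |T (m-1)|) = (if m = 0 then 0 else P (m-1)) := by
      by_cases hm0 : m = 0
      · rw [if_pos hm0, if_pos hm0]
      · rw [if_neg hm0, if_neg hm0, habs (m-1) (by omega)]
    rw [hif]
    exact k2
  · show |bilinB Q d e j i| ≤ |T m|
    rw [habsB, habs m (le_refl m)]
    exact k3
  · show 0 < bilinB Q d e j i * (-1:ℚ) ^ (j + i - d)
    rw [hjm, hBdef]
    exact k1
end

section
/- Let q = 2 and e \ge d+1. For all 0 \le i \le d-1 and 1 \le j \le d, the eigenvalues of the bilinear forms graph satisfy |B_j(i)| > |B_j(i+1)|. -/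
namespace BilinAux

/-- `P a = 2^a - 1` over ℚ. -/
def P (a : ℕ) : ℚ := 2 ^ a - 1

lemma P_pos {a : ℕ} (ha : 1 ≤ a) : 0 < P a := by
  have h : (2:ℚ) ^ 1 ≤ 2 ^ a := by
    apply pow_le_pow_right₀ (by norm_num) ha
  simp only [P]
  norm_num at h ⊢
  linarith

lemma P_nonneg (a : ℕ) : 0 ≤ P a := by
  have h : (1:ℚ) ≤ 2 ^ a := one_le_pow₀ (by norm_num : (1:ℚ) ≤ 2)
  simp only [P]; linarith

lemma P_ne {a : ℕ} (ha : 1 ≤ a) : P a ≠ 0 := ne_of_gt (P_pos ha)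

lemma P_lt (a : ℕ) : P a < 2 ^ a := by
  simp only [P]; linarith [pow_pos (by norm_num : (0:ℚ) < 2) a]

lemma P_ge {a : ℕ} (ha : 1 ≤ a) : (2:ℚ) ^ (a - 1) ≤ P a := by
  obtain ⟨b, rfl⟩ : ∃ b, a = b + 1 := ⟨a - 1, by omega⟩
  have h : (1:ℚ) ≤ 2 ^ b := one_le_pow₀ (by norm_num : (1:ℚ) ≤ 2)
  simp only [P, pow_succ]
  have : b + 1 - 1 = b := by omega
  rw [this]; linarith

lemma P_one : P 1 = 1 := by norm_num [P]

lemma P_split {a b : ℕ} (h : b ≤ a) : P a = P (a - b) + 2 ^ (a - b) * P b := by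
  simp only [P]
  have : (2:ℚ) ^ (a - b) * 2 ^ b = 2 ^ a := by
    rw [← pow_add]; congr 1; omega
  ring_nf
  nlinarith [this]

/-- abbreviation -/
def G (m l : ℕ) : ℚ := gaussBinom 2 m l

lemma G_pos {m l : ℕ} (h : l ≤ m) : 0 < G m l := by
  unfold G gaussBinom
  apply Finset.prod_pos
  intro t ht
  rw [Finset.mem_range] at ht
  apply div_pos
  · have := P_pos (a := m - t) (by omega)
    simpa [P] using this
  · have := P_pos (a := t + 1) (by omega)
    simpa [P] using this

lemma G_nonneg {m l : ℕ} (h : l ≤ m) : 0 ≤ G m l := (G_pos h).le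

/-- Column identity: `G m (l+1) * P (l+1) = G m l * P (m - l)`. -/
lemma G_col (m l : ℕ) : G m (l+1) * P (l+1) = G m l * P (m - l) := by
  have hne : P (l+1) ≠ 0 := P_ne (by omega)
  have e1 : G m (l+1) = G m l * (P (m - l) / P (l+1)) := by
    simp only [G, gaussBinom, Finset.prod_range_succ, P]
  rw [e1, mul_assoc, div_mul_cancel₀ _ hne]

/-- Row identity: for `l ≤ m`, `G (m+1) l * P (m+1-l) = G m l * P (m+1)`. -/
lemma G_row : ∀ {l m : ℕ}, l ≤ m → G (m+1) l * P (m+1-l) = G m l * P (m+1) := by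
  intro l
  induction l with
  | zero => intro m _; simp [G, gaussBinom]
  | succ l ih =>
    intro m hlm
    have hml : l ≤ m := by omega
    have ihm := ih hml
    have hne : P (l+1) ≠ 0 := P_ne (by omega)
    have e1 : G (m+1) (l+1) = G (m+1) l * (P (m+1-l) / P (l+1)) := by
      simp only [G, gaussBinom, Finset.prod_range_succ, P]
    have e2 : G m (l+1) = G m l * (P (m-l) / P (l+1)) := by
      simp only [G, gaussBinom, Finset.prod_range_succ, P]
    have h3 : m + 1 - (l+1) = m - l := by omega
    rw [e1, e2, h3]
    calc G (m+1) l * (P (m+1-l) / P (l+1)) * P (m-l)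
        = (G (m+1) l * P (m+1-l)) * P (m-l) / P (l+1) := by ring
      _ = (G m l * P (m+1)) * P (m-l) / P (l+1) := by rw [ihm]
      _ = G m l * (P (m-l) / P (l+1)) * P (m+1) := by ring


/-- The absolute value of the `h`-th term. -/
def A (d e j i h : ℕ) : ℚ :=
  2 ^ (e * h + (j - h).choose 2) * G (d - h) (d - j) * G (d - i) h

lemma bilinT_eq (d e j i h : ℕ) : bilinT 2 d e j i h = (-1) ^ (j - h) * A d e j i h := by
  simp only [bilinT, A, G]; ring

lemma A_pos {d e j i h : ℕ} (hj : j ≤ d) (h1 : h ≤ j) (h2 : h ≤ d - i) :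
    0 < A d e j i h := by
  apply mul_pos
  apply mul_pos
  · exact pow_pos (by norm_num) _
  · exact G_pos (by omega)
  · exact G_pos h2

/-- The master step identity relating consecutive terms. -/
lemma A_step {d e j i h : ℕ} (hjd : j ≤ d) (hh : h < j) (hn : h < d - i) :
    A d e j i (h+1) * (P (d-h) * P (h+1) * 2 ^ (j-h-1)) =
    A d e j i h * (2 ^ e * P (j-h) * P (d-i-h)) := by
  have f1 : G (d-i) (h+1) * P (h+1) = G (d-i) h * P (d-i-h) := G_col (d-i) h
  have f2 : G (d-h) (d-j) * P (j-h) = G (d-(h+1)) (d-j) * P (d-h) := by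
    have hG := G_row (l := d - j) (m := d - h - 1) (by omega)
    have e1 : d - h - 1 + 1 = d - h := by omega
    rw [e1] at hG
    have e2 : d - h - (d - j) = j - h := by omega
    rw [e2] at hG
    have e3 : d - (h+1) = d - h - 1 := by omega
    rw [e3]
    exact hG
  have f3 : e * (h+1) + (j-(h+1)).choose 2 + (j-h-1) = e * h + (j-h).choose 2 + e := by
    have k1 : j - h = (j - h - 1) + 1 := by omega
    have k2 : j - (h+1) = j - h - 1 := by omega
    rw [k1, k2, Nat.choose_succ_succ, Nat.choose_one_right]
    ring_nf
    omega
  calc A d e j i (h+1) * (P (d-h) * P (h+1) * 2 ^ (j-h-1))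
      = (G (d-(h+1)) (d-j) * P (d-h)) * (G (d-i) (h+1) * P (h+1)) *
          2 ^ (e*(h+1) + (j-(h+1)).choose 2 + (j-h-1)) := by
        simp only [A, pow_add]; ring
    _ = (G (d-h) (d-j) * P (j-h)) * (G (d-i) h * P (d-i-h)) *
          2 ^ (e*h + (j-h).choose 2 + e) := by rw [← f2, f1, f3]
    _ = A d e j i h * (2 ^ e * P (j-h) * P (d-i-h)) := by
        simp only [A, pow_add]; ring

/-- Terms are monotone increasing. -/
lemma A_mono {d e j i h : ℕ} (hjd : j ≤ d) (he : d + 1 ≤ e) (hh : h < j) (hn : h < d - i) :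
    A d e j i h ≤ A d e j i (h+1) := by
  have hApos : 0 < A d e j i h := A_pos hjd (by omega) (by omega)
  have mi := A_step (e := e) hjd hh hn
  have lfpos : (0:ℚ) < P (d-h) * P (h+1) * 2 ^ (j-h-1) := by
    apply mul_pos (mul_pos (P_pos (by omega)) (P_pos (by omega))) (pow_pos (by norm_num) _)
  have key : P (d-h) * P (h+1) * (2:ℚ) ^ (j-h-1) ≤ 2 ^ e * P (j-h) * P (d-i-h) := by
    have u1 : P (d-h) * P (h+1) * (2:ℚ) ^ (j-h-1) ≤ 2 ^ (d-h) * 2 ^ (h+1) * 2 ^ (j-h-1) := by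
      have w1 : P (d-h) * P (h+1) ≤ (2:ℚ) ^ (d-h) * 2 ^ (h+1) :=
        mul_le_mul (P_lt _).le (P_lt _).le (P_nonneg _)
          (pow_pos (by norm_num : (0:ℚ) < 2) _).le
      exact mul_le_mul_of_nonneg_right w1 (pow_pos (by norm_num : (0:ℚ) < 2) _).le
    have u2 : (2:ℚ) ^ (d-h) * 2 ^ (h+1) * 2 ^ (j-h-1) ≤ 2 ^ e * 2 ^ (j-h-1) * 2 ^ (d-i-h-1) := by
      rw [← pow_add, ← pow_add, ← pow_add, ← pow_add]
      apply pow_le_pow_right₀ (by norm_num)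
      omega
    have u3 : (2:ℚ) ^ e * 2 ^ (j-h-1) * 2 ^ (d-i-h-1) ≤ 2 ^ e * P (j-h) * P (d-i-h) := by
      have g1 : (2:ℚ) ^ (j-h-1) ≤ P (j-h) := P_ge (by omega)
      have g2 : (2:ℚ) ^ (d-i-h-1) ≤ P (d-i-h) := P_ge (by omega)
      calc (2:ℚ) ^ e * 2 ^ (j-h-1) * 2 ^ (d-i-h-1)
          = 2 ^ e * (2 ^ (j-h-1) * 2 ^ (d-i-h-1)) := by ring
        _ ≤ 2 ^ e * (P (j-h) * P (d-i-h)) := by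
            apply mul_le_mul_of_nonneg_left _ (pow_pos (by norm_num : (0:ℚ) < 2) e).le
            exact mul_le_mul g1 g2 (pow_pos (by norm_num : (0:ℚ) < 2) _).le (P_nonneg _)
        _ = 2 ^ e * P (j-h) * P (d-i-h) := by ring
    linarith
  have step2 : A d e j i h * (P (d-h) * P (h+1) * 2 ^ (j-h-1)) ≤
      A d e j i (h+1) * (P (d-h) * P (h+1) * 2 ^ (j-h-1)) := by
    rw [mi]
    exact mul_le_mul_of_nonneg_left key hApos.le
  exact le_of_mul_le_mul_right step2 lfpos

/-- Key inequality, case `j < d - i`. -/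
lemma case_A {d e i j : ℕ} (he : d + 1 ≤ e) (hj1 : 1 ≤ j) (hjd : j ≤ d)
    (hjn : j < d - i) :
    A d e j (i+1) j < A d e j i j - A d e j i (j-1) := by
  have hx : A d e j i j = 2 ^ (e*j) * G (d-j) (d-j) * G (d-i) j := by
    simp only [A, Nat.sub_self]
    norm_num
  have hx1 : A d e j (i+1) j = 2 ^ (e*j) * G (d-j) (d-j) * G (d-i-1) j := by
    simp only [A, Nat.sub_self]
    rw [show d - (i+1) = d - i - 1 from by omega]
    norm_num
  have hx2 : A d e j i (j-1) =
      2 ^ (e*(j-1)) * (G (d-j) (d-j) * P (d-j+1)) * G (d-i) (j-1) := by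
    simp only [A]
    rw [show j - (j-1) = 1 from by omega]
    rw [show (1:ℕ).choose 2 = 0 from rfl]
    rw [show d - (j-1) = (d-j) + 1 from by omega]
    have grow := G_row (l := d-j) (m := d-j) le_rfl
    rw [show d - j + 1 - (d - j) = 1 from by omega, P_one, mul_one] at grow
    rw [grow]
    norm_num
  have gcol : G (d-i) j * P j = G (d-i) (j-1) * P (d-i-j+1) := by
    have h := G_col (d-i) (j-1)
    rw [show j - 1 + 1 = j from by omega,
        show d - i - (j-1) = d-i-j+1 from by omega] at h
    exact h
  have grow2 : G (d-i-1) j * P (d-i) = G (d-i) j * P (d-i-j) := by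
    have h := G_row (l := j) (m := d-i-1) (by omega)
    rw [show d - i - 1 + 1 = d - i from by omega] at h
    exact h.symm
  have epow : (2:ℚ) ^ (e*j) = 2 ^ (e*(j-1)) * 2 ^ e := by
    rw [← pow_add]; congr 1
    obtain ⟨j', rfl⟩ : ∃ j', j = j' + 1 := ⟨j-1, by omega⟩
    simp [Nat.mul_succ]
  set C : ℚ := 2 ^ (e*(j-1)) * G (d-j) (d-j) * G (d-i) (j-1) with hC
  have Cpos : 0 < C := by
    apply mul_pos (mul_pos (pow_pos (by norm_num) _) (G_pos le_rfl)) (G_pos (by omega))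
  have e1 : A d e j i j * (P j * P (d-i)) = C * 2 ^ e * (P (d-i-j+1) * P (d-i)) := by
    calc A d e j i j * (P j * P (d-i))
        = 2 ^ (e*j) * G (d-j) (d-j) * (G (d-i) j * P j) * P (d-i) := by rw [hx]; ring
      _ = 2 ^ (e*j) * G (d-j) (d-j) * (G (d-i) (j-1) * P (d-i-j+1)) * P (d-i) := by
          rw [gcol]
      _ = C * 2 ^ e * (P (d-i-j+1) * P (d-i)) := by rw [hC, epow]; ring
  have e2 : A d e j i (j-1) * (P j * P (d-i)) = C * P (d-j+1) * (P j * P (d-i)) := by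
    rw [hx2, hC]; ring
  have e3 : A d e j (i+1) j * (P j * P (d-i)) = C * 2 ^ e * (P (d-i-j+1) * P (d-i-j)) := by
    calc A d e j (i+1) j * (P j * P (d-i))
        = 2 ^ (e*j) * G (d-j) (d-j) * (G (d-i-1) j * P (d-i)) * P j := by rw [hx1]; ring
      _ = 2 ^ (e*j) * G (d-j) (d-j) * (G (d-i) j * P (d-i-j)) * P j := by rw [grow2]
      _ = 2 ^ (e*j) * G (d-j) (d-j) * (G (d-i) j * P j) * P (d-i-j) := by ring
      _ = 2 ^ (e*j) * G (d-j) (d-j) * (G (d-i) (j-1) * P (d-i-j+1)) * P (d-i-j) := by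
          rw [gcol]
      _ = C * 2 ^ e * (P (d-i-j+1) * P (d-i-j)) := by rw [hC, epow]; ring
  -- the core numeric inequality
  have core : P (d-j+1) * P (d-i) < 2 ^ e * P (d-i-j+1) * 2 ^ (d-i-j) := by
    calc P (d-j+1) * P (d-i) < 2 ^ (d-j+1) * 2 ^ (d-i) :=
          mul_lt_mul'' (P_lt _) (P_lt _) (P_nonneg _) (P_nonneg _)
      _ = 2 ^ ((d-j+1) + (d-i)) := (pow_add 2 _ _).symm
      _ ≤ 2 ^ (e + (d-i-j) + (d-i-j)) := by
          apply pow_le_pow_right₀ (by norm_num); omega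
      _ = 2 ^ e * 2 ^ (d-i-j) * 2 ^ (d-i-j) := by rw [pow_add, pow_add]
      _ ≤ 2 ^ e * P (d-i-j+1) * 2 ^ (d-i-j) := by
          apply mul_le_mul_of_nonneg_right _ (pow_pos (by norm_num : (0:ℚ) < 2) _).le
          apply mul_le_mul_of_nonneg_left _ (pow_pos (by norm_num : (0:ℚ) < 2) e).le
          have := P_ge (a := d-i-j+1) (by omega)
          simpa using this
  have hsplit : P (d-i) = P (d-i-j) + 2 ^ (d-i-j) * P j := P_split (by omega)
  have hP : 2^e * (P (d-i-j+1) * P (d-i-j)) + P (d-j+1) * (P j * P (d-i)) <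
      2^e * (P (d-i-j+1) * P (d-i)) := by
    have core2 := mul_lt_mul_of_pos_right core (P_pos hj1)
    have expand : 2^e * (P (d-i-j+1) * P (d-i)) =
        2^e * (P (d-i-j+1) * P (d-i-j)) + 2^e * P (d-i-j+1) * 2^(d-i-j) * P j := by
      rw [hsplit]; ring
    rw [expand]
    linarith [core2]
  have key : (A d e j (i+1) j + A d e j i (j-1)) * (P j * P (d-i)) <
      A d e j i j * (P j * P (d-i)) := by
    rw [add_mul, e3, e2, e1]
    calc C * 2^e * (P (d-i-j+1) * P (d-i-j)) + C * P (d-j+1) * (P j * P (d-i))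
        = C * (2^e * (P (d-i-j+1) * P (d-i-j)) + P (d-j+1) * (P j * P (d-i))) := by ring
      _ < C * (2^e * (P (d-i-j+1) * P (d-i))) := by
          exact mul_lt_mul_of_pos_left hP Cpos
      _ = C * 2^e * (P (d-i-j+1) * P (d-i)) := by ring
  have hQ : (0:ℚ) < P j * P (d-i) := mul_pos (P_pos hj1) (P_pos (by omega))
  have hfinal := lt_of_mul_lt_mul_right key hQ.le
  linarith

/-- Key inequality, case `d - i ≤ j`. -/
lemma case_B {d e i j : ℕ} (he : d + 1 ≤ e) (hj1 : 1 ≤ j) (hjd : j ≤ d)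
    (hid : i < d) (hnj : d - i ≤ j) :
    A d e j (i+1) (d-i-1) < A d e j i (d-i) - A d e j i (d-i-1) := by
  have hn1 : 1 ≤ d - i := by omega
  -- relations between binomials
  have gA : G (d-i) (d-i-1) = G (d-i-1) (d-i-1) * P (d-i) := by
    have h := G_row (l := d-i-1) (m := d-i-1) le_rfl
    rw [show d-i-1+1 = d-i from by omega,
        show d-i - (d-i-1) = 1 from by omega, P_one, mul_one] at h
    exact h
  have gB : G (d-i) (d-i) = G (d-i-1) (d-i-1) := by
    have h := G_col (d-i) (d-i-1)
    rw [show d-i-1+1 = d-i from by omega,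
        show d-i - (d-i-1) = 1 from by omega, P_one, mul_one] at h
    rw [gA] at h
    exact mul_right_cancel₀ (P_ne hn1) h
  have gC : G i (d-j) * P (i+1) = G (i+1) (d-j) * P (j-(d-i)+1) := by
    have h := G_row (l := d-j) (m := i) (by omega)
    rw [show i+1 - (d-j) = j-(d-i)+1 from by omega] at h
    linarith [h]
  -- expression for the three terms
  have eA : A d e j i (d-i-1) = A d e j (i+1) (d-i-1) * P (d-i) := by
    simp only [A]
    rw [show d - (i+1) = d-i-1 from by omega, gA]
    ring
  have eB : A d e j i (d-i) * (P (i+1) * 2 ^ (j-(d-i))) =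
      A d e j (i+1) (d-i-1) * (2 ^ e * P (j-(d-i)+1)) := by
    simp only [A]
    rw [show d - (d-i) = i from by omega, show d - (i+1) = d-i-1 from by omega,
        show d - (d-i-1) = i+1 from by omega, gB]
    have hch : (j - (d-i-1)).choose 2 = (j-(d-i)).choose 2 + (j-(d-i)) := by
      rw [show j - (d-i-1) = (j-(d-i)) + 1 from by omega, Nat.choose_succ_succ,
          Nat.choose_one_right]
      ring_nf
    have hmul : e * (d-i) = e * (d-i-1) + e := by
      obtain ⟨n', hn'⟩ : ∃ n', d - i = n' + 1 := ⟨d-i-1, by omega⟩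
      rw [hn']
      simp [Nat.mul_succ]
    have epow : (2:ℚ)^(e*(d-i) + (j-(d-i)).choose 2) * 2^(j-(d-i)) =
        2^(e*(d-i-1) + (j-(d-i-1)).choose 2) * 2^e := by
      rw [← pow_add, ← pow_add]
      congr 1
      rw [hch, hmul]
      ring
    calc 2^(e*(d-i) + (j-(d-i)).choose 2) * G i (d-j) * G (d-i-1) (d-i-1) *
          (P (i+1) * 2^(j-(d-i)))
        = (2^(e*(d-i) + (j-(d-i)).choose 2) * 2^(j-(d-i))) * (G i (d-j) * P (i+1)) *
            G (d-i-1) (d-i-1) := by ring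
      _ = (2^(e*(d-i-1) + (j-(d-i-1)).choose 2) * 2^e) *
            (G (i+1) (d-j) * P (j-(d-i)+1)) * G (d-i-1) (d-i-1) := by rw [gC, epow]
      _ = 2^(e*(d-i-1) + (j-(d-i-1)).choose 2) * G (i+1) (d-j) * G (d-i-1) (d-i-1) *
            (2^e * P (j-(d-i)+1)) := by ring
  have Dpos : 0 < A d e j (i+1) (d-i-1) := by
    apply A_pos hjd (by omega)
    omega
  have hQ : (0:ℚ) < P (i+1) * 2 ^ (j-(d-i)) :=
    mul_pos (P_pos (by omega)) (pow_pos (by norm_num) _)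
  -- numeric core
  have core : (2:ℚ) ^ (d-i) * (P (i+1) * 2 ^ (j-(d-i))) < 2 ^ e * P (j-(d-i)+1) := by
    calc (2:ℚ) ^ (d-i) * (P (i+1) * 2 ^ (j-(d-i)))
        < 2 ^ (d-i) * (2 ^ (i+1) * 2 ^ (j-(d-i))) := by
          apply mul_lt_mul_of_pos_left _ (pow_pos (by norm_num : (0:ℚ) < 2) _)
          exact mul_lt_mul_of_pos_right (P_lt _) (pow_pos (by norm_num) _)
      _ = 2 ^ ((d-i) + (i+1) + (j-(d-i))) := by rw [pow_add, pow_add]; ring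
      _ ≤ 2 ^ (e + (j-(d-i))) := by apply pow_le_pow_right₀ (by norm_num); omega
      _ = 2 ^ e * 2 ^ (j-(d-i)) := pow_add 2 _ _
      _ ≤ 2 ^ e * P (j-(d-i)+1) := by
          apply mul_le_mul_of_nonneg_left _ (pow_pos (by norm_num : (0:ℚ) < 2) e).le
          have := P_ge (a := j-(d-i)+1) (by omega)
          simpa using this
  -- assemble
  have key : (A d e j (i+1) (d-i-1) + A d e j i (d-i-1)) * (P (i+1) * 2 ^ (j-(d-i))) <
      A d e j i (d-i) * (P (i+1) * 2 ^ (j-(d-i))) := by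
    rw [eA, eB]
    have h1 : A d e j (i+1) (d-i-1) + A d e j (i+1) (d-i-1) * P (d-i) =
        A d e j (i+1) (d-i-1) * 2 ^ (d-i) := by
      simp only [P]; ring
    rw [h1, mul_assoc]
    exact mul_lt_mul_of_pos_left core Dpos
  have hfinal := lt_of_mul_lt_mul_right key hQ.le
  linarith

/-- Sandwich bounds for an alternating sum of an increasing nonnegative sequence. -/
lemma alt_bounds (f : ℕ → ℚ) (h0 : 0 ≤ f 0) :
    ∀ m : ℕ, (∀ h < m, f h ≤ f (h+1)) →
      0 ≤ (∑ h ∈ Finset.range (m+1), (-1:ℚ)^(m-h) * f h) ∧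
      (∑ h ∈ Finset.range (m+1), (-1:ℚ)^(m-h) * f h) ≤ f m ∧
      f m - f (m-1) ≤ (∑ h ∈ Finset.range (m+1), (-1:ℚ)^(m-h) * f h) := by
  intro m
  induction m with
  | zero =>
    intro _
    rw [show (0:ℕ)+1 = 1 from rfl, Finset.sum_range_one]
    simp only [Nat.sub_self, pow_zero, one_mul, Nat.zero_sub]
    exact ⟨h0, le_rfl, by linarith⟩
  | succ m ih =>
    intro hmono
    obtain ⟨ihl, ihu, _⟩ := ih (fun h hh => hmono h (by omega))
    have hstep : (∑ h ∈ Finset.range (m+1+1), (-1:ℚ)^(m+1-h) * f h) =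
        f (m+1) - (∑ h ∈ Finset.range (m+1), (-1:ℚ)^(m-h) * f h) := by
      rw [Finset.sum_range_succ]
      have hneg : (∑ h ∈ Finset.range (m+1), (-1:ℚ)^(m+1-h) * f h) =
          -(∑ h ∈ Finset.range (m+1), (-1:ℚ)^(m-h) * f h) := by
        rw [← Finset.sum_neg_distrib]
        apply Finset.sum_congr rfl
        intro h hh
        rw [Finset.mem_range] at hh
        rw [show m + 1 - h = (m - h) + 1 from by omega, pow_succ]
        ring
      rw [hneg, Nat.sub_self, pow_zero, one_mul]
      ring
    have hmm : f m ≤ f (m+1) := hmono m (by omega)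
    refine ⟨?_, ?_, ?_⟩
    · rw [hstep]; linarith
    · rw [hstep]; linarith
    · rw [hstep, show m + 1 - 1 = m from rfl]; linarith

lemma B_eq (d e j i : ℕ) :
    bilinB 2 d e j i = (-1:ℚ) ^ (j - min j (d-i)) *
      ∑ h ∈ Finset.range (min j (d-i) + 1),
        (-1:ℚ) ^ (min j (d-i) - h) * A d e j i h := by
  unfold bilinB
  rw [Finset.mul_sum]
  apply Finset.sum_congr rfl
  intro h hh
  rw [Finset.mem_range] at hh
  rw [bilinT_eq, ← mul_assoc, ← pow_add]
  congr 2
  omega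

theorem main (d e i j : ℕ) (he : d + 1 ≤ e)
    (hi : i ≤ d - 1) (hj1 : 1 ≤ j) (hj2 : j ≤ d) :
    |bilinB (2 : ℚ) d e j (i + 1)| < |bilinB (2 : ℚ) d e j i| := by
  have hd1 : 1 ≤ d := le_trans hj1 hj2
  have hid : i < d := by omega
  have hmono1 : ∀ h, h < min j (d-i) → A d e j i h ≤ A d e j i (h+1) :=
    fun h hh => A_mono hj2 he (by omega) (by omega)
  have hmono2 : ∀ h, h < min j (d-(i+1)) → A d e j (i+1) h ≤ A d e j (i+1) (h+1) :=
    fun h hh => A_mono hj2 he (by omega) (by omega)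
  have h0i : 0 ≤ A d e j i 0 := (A_pos hj2 (by omega) (by omega)).le
  have h0i1 : 0 ≤ A d e j (i+1) 0 := (A_pos hj2 (by omega) (by omega)).le
  obtain ⟨S1nn, _, S1lb⟩ := alt_bounds (A d e j i) h0i (min j (d-i)) hmono1
  obtain ⟨S2nn, S2ub, _⟩ := alt_bounds (A d e j (i+1)) h0i1 (min j (d-(i+1))) hmono2
  have habs1 : |bilinB 2 d e j i| =
      ∑ h ∈ Finset.range (min j (d-i)+1), (-1:ℚ)^(min j (d-i)-h) * A d e j i h := by
    rw [B_eq, abs_mul, abs_pow, abs_neg, abs_one, one_pow, one_mul, abs_of_nonneg S1nn]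
  have habs2 : |bilinB 2 d e j (i+1)| =
      ∑ h ∈ Finset.range (min j (d-(i+1))+1),
        (-1:ℚ)^(min j (d-(i+1))-h) * A d e j (i+1) h := by
    rw [B_eq, abs_mul, abs_pow, abs_neg, abs_one, one_pow, one_mul, abs_of_nonneg S2nn]
  rw [habs1, habs2]
  rcases lt_or_ge j (d-i) with hcase | hcase
  · have hm1 : min j (d-i) = j := by omega
    have hm2 : min j (d-(i+1)) = j := by omega
    calc (∑ h ∈ Finset.range (min j (d-(i+1))+1),
            (-1:ℚ)^(min j (d-(i+1))-h) * A d e j (i+1) h)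
        ≤ A d e j (i+1) (min j (d-(i+1))) := S2ub
      _ < A d e j i (min j (d-i)) - A d e j i (min j (d-i) - 1) := by
          rw [hm1, hm2]; exact case_A he hj1 hj2 hcase
      _ ≤ _ := S1lb
  · have hm1 : min j (d-i) = d-i := by omega
    have hm2 : min j (d-(i+1)) = d-i-1 := by omega
    calc (∑ h ∈ Finset.range (min j (d-(i+1))+1),
            (-1:ℚ)^(min j (d-(i+1))-h) * A d e j (i+1) h)
        ≤ A d e j (i+1) (min j (d-(i+1))) := S2ub
      _ < A d e j i (min j (d-i)) - A d e j i (min j (d-i) - 1) := by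
          rw [hm1, hm2]; exact case_B he hj1 hj2 hid hcase
      _ ≤ _ := S1lb

end BilinAux

theorem bilinB_abs_strict_anti_q2 (d e i j : ℕ) (he : d + 1 ≤ e)
    (hi : i ≤ d - 1) (hj1 : 1 ≤ j) (hj2 : j ≤ d) :
    |bilinB (2 : ℚ) d e j (i + 1)| < |bilinB (2 : ℚ) d e j i| := by
  exact BilinAux.main d e i j he hi hj1 hj2
end
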